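/- Let (w_K, x_K) ⊆ {0,1}^ℤ × {0,1}^ℤ be a good sequence of pairs with coordinatewise limit (w, x). If for each K the subshift [w_K, x_K]‾ (the closure of {σ^n y : w_K ≤ y ≤ x_K, n ∈ ℤ}) is a sandwich measure-theoretically subordinate subshift with base measure ρ_K (corresponding to the sequence (N_i) in the definition of goodness), then both ⋂_{K≥1} [w_K, x_K]‾ and [w, x]‾ are sandwich measure-theoretically subordinate subshifts with base measure ρ = lim_K ρ_K. -/

import Mathlib

open MeasureTheory Filter Topology

/-- The full shift space `{0,1}^ℤ`, with `Bool` playing the role of `{0,1}`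
(`false` ↔ `0`, `true` ↔ `1`). -/
abbrev BinSeq : Type := ℤ → Bool

/-- The left shift `σ`. -/
def shift : BinSeq → BinSeq := fun x n => x (n + 1)

/-- The product shift `σ × σ`. -/
def shift2 : BinSeq × BinSeq → BinSeq × BinSeq := Prod.map shift shift

/-- The product shift `σ × σ × σ` on triples `((w,x),y)`. -/
def shift3 : (BinSeq × BinSeq) × BinSeq → (BinSeq × BinSeq) × BinSeq := Prod.map shift2 shift

/-- Coordinatewise multiplication `M(x,y)` of two 0-1 sequences. -/
def Mmul : BinSeq × BinSeq → BinSeq := fun p n => p.1 n && p.2 n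

/-- The map `N((w,x),y) = (1-y)·w + y·x` (coordinatewise: `x` where `y = 1`, `w` where `y = 0`). -/
def Nmap : (BinSeq × BinSeq) × BinSeq → BinSeq := fun t n => bif t.2 n then t.1.2 n else t.1.1 n

/-- The coordinatewise partial order `y ≤ x` on `{0,1}^ℤ`. -/
def leSeq (y x : BinSeq) : Prop := ∀ n, y n ≤ x n

/-- A subshift: a closed, shift-invariant subset of `{0,1}^ℤ`. -/
def IsSubshift (X : Set BinSeq) : Prop := IsClosed X ∧ shift ⁻¹' X = X

/-- The set of `T`-invariant Borel probability measures. -/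
def InvProb {α : Type*} [MeasurableSpace α] (T : α → α) : Set (Measure α) :=
  {μ | IsProbabilityMeasure μ ∧ Measure.map T μ = μ}

/-- `𝓜(X)`: shift-invariant Borel probability measures concentrated on `X`. -/
def MeasOn (X : Set BinSeq) : Set (Measure BinSeq) :=
  {μ | μ ∈ InvProb shift ∧ μ X = 1}

/-- `𝓜(Z)` for `Z ⊆ {0,1}^ℤ × {0,1}^ℤ`. -/
def MeasOn2 (Z : Set (BinSeq × BinSeq)) : Set (Measure (BinSeq × BinSeq)) :=
  {ρ | ρ ∈ InvProb shift2 ∧ ρ Z = 1}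

/-- `X` is a measure-theoretically subordinate subshift with base measure `ν`:
`𝓜(X) = {M_*(ρ) : ρ ∈ 𝓜({0,1}^ℤ × {0,1}^ℤ, σ×σ), (π₁)_*(ρ) = ν}`. -/
def Subord (X : Set BinSeq) (ν : Measure BinSeq) : Prop :=
  MeasOn X = {μ | ∃ ρ ∈ InvProb shift2,
    Measure.map Prod.fst ρ = ν ∧ Measure.map Mmul ρ = μ}

/-- `X` is a sandwich measure-theoretically subordinate subshift with pre-base measure `ρ`:
`𝓜(X) = {N_*(κ) : κ ∈ 𝓜(({0,1}^ℤ)³), (π₁,₂)_*(κ) = ρ}`. -/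
def SandwichSubord (X : Set BinSeq) (ρ : Measure (BinSeq × BinSeq)) : Prop :=
  MeasOn X = {μ | ∃ κ ∈ InvProb shift3,
    Measure.map Prod.fst κ = ρ ∧ Measure.map Nmap κ = μ}

/-- `ρ({(w,x) : w ≤ x coordinatewise}) = 1`: a pre-base measure satisfying this is a base
measure. -/
def AboveDiag (ρ : Measure (BinSeq × BinSeq)) : Prop :=
  ρ {p : BinSeq × BinSeq | ∀ n, p.1 n ≤ p.2 n} = 1

/-- The cylinder `{x : x₀ = b}`. -/
def cylB (b : Bool) : Set BinSeq := {x : BinSeq | x 0 = b}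

/-- The set `[w,x] = {σ^k y : w ≤ y ≤ x, k ∈ ℤ}`. -/
def sandwichSet (w x : BinSeq) : Set BinSeq :=
  {z | ∃ (k : ℤ) (y : BinSeq), (∀ n, w n ≤ y n) ∧ (∀ n, y n ≤ x n) ∧ z = fun n => y (n + k)}

/-- Topological entropy (base-2) of a subshift: exponential growth rate of the number of
`n`-blocks appearing in `X`. -/
noncomputable def htop (X : Set BinSeq) : ℝ :=
  Filter.limsup (fun n : ℕ =>
    Real.logb 2
      ((Set.ncard {A : Fin n → Bool | ∃ x ∈ X, ∀ i : Fin n, x ((i : ℕ) : ℤ) = A i} : ℝ))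
      / (n : ℝ)) Filter.atTop

/-- Kolmogorov–Sinai entropy (base-2) of a shift-invariant measure on `{0,1}^ℤ`,
computed via the generating partition into cylinders. -/
noncomputable def entropy (μ : Measure BinSeq) : ℝ :=
  Filter.limsup (fun n : ℕ =>
    (∑ A : Fin n → Bool,
      Real.negMulLog ((μ {x : BinSeq | ∀ i : Fin n, x ((i : ℕ) : ℤ) = A i}).toReal))
      / ((n : ℝ) * Real.log 2)) Filter.atTop

/-- Kolmogorov–Sinai entropy (base-2) of a `σ×σ`-invariant measure on
`{0,1}^ℤ × {0,1}^ℤ`. -/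
noncomputable def entropy2 (ρ : Measure (BinSeq × BinSeq)) : ℝ :=
  Filter.limsup (fun n : ℕ =>
    (∑ A : Fin n → Bool, ∑ B : Fin n → Bool,
      Real.negMulLog ((ρ {p : BinSeq × BinSeq |
        (∀ i : Fin n, p.1 ((i : ℕ) : ℤ) = A i) ∧
        (∀ i : Fin n, p.2 ((i : ℕ) : ℤ) = B i)}).toReal))
      / ((n : ℝ) * Real.log 2)) Filter.atTop

open scoped Classical in
/-- Topological pressure (base-2) of a subshift `X` with potential `φ`:
`𝒫_{X,φ} = lim (1/n) log₂ Σ_{A ∈ ℒ_n(X)} 2^{sup_{x ∈ [A] ∩ X} φ⁽ⁿ⁾(x)}`. -/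
noncomputable def pressure (X : Set BinSeq) (φ : BinSeq → ℝ) : ℝ :=
  Filter.limsup (fun n : ℕ =>
    Real.logb 2 (∑ A : Fin n → Bool,
      if ∃ x ∈ X, ∀ i : Fin n, x ((i : ℕ) : ℤ) = A i then
        (2 : ℝ) ^ sSup {r : ℝ | ∃ x ∈ X, (∀ i : Fin n, x ((i : ℕ) : ℤ) = A i) ∧
          r = ∑ k ∈ Finset.range n, φ (shift^[k] x)}
      else 0) / (n : ℝ)) Filter.atTop

/-- Birkhoff average of a continuous function along the first `N` points of the `T`-orbit. -/
noncomputable def birkAvg {α : Type*} [TopologicalSpace α] (T : α → α) (x : α) (N : ℕ)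
    (f : C(α, ℝ)) : ℝ :=
  (∑ n ∈ Finset.range N, f (T^[n] x)) / (N : ℝ)

/-- `x` is quasi-generic for `μ` along `(N i)`: the empirical measures
`(1/N_i) Σ_{n<N_i} δ_{T^n x}` converge weakly-* to `μ`. -/
def QuasiGenericAlong {α : Type*} [TopologicalSpace α] [MeasurableSpace α]
    (T : α → α) (x : α) (N : ℕ → ℕ) (μ : Measure α) : Prop :=
  ∀ f : C(α, ℝ), Filter.Tendsto (fun i => birkAvg T x (N i) f) Filter.atTop
    (nhds (∫ y, f y ∂μ))

/-- `x` is generic for `μ`. -/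
def GenericFor {α : Type*} [TopologicalSpace α] [MeasurableSpace α]
    (T : α → α) (x : α) (μ : Measure α) : Prop :=
  QuasiGenericAlong T x (fun i => i) μ

/-- Weak-* convergence of a sequence of measures. -/
def WeakTendsto {α : Type*} [TopologicalSpace α] [MeasurableSpace α]
    (μs : ℕ → Measure α) (μ : Measure α) : Prop :=
  ∀ f : C(α, ℝ), Filter.Tendsto (fun K => ∫ y, f y ∂(μs K)) Filter.atTop
    (nhds (∫ y, f y ∂μ))

/-- `V(y)`: the invariant measures for which `y` is quasi-generic (along some
increasing sequence). -/
def Vset (y : BinSeq) : Set (Measure BinSeq) :=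
  {μ | μ ∈ InvProb shift ∧ ∃ N : ℕ → ℕ, StrictMono N ∧ QuasiGenericAlong shift y N μ}

/-- `V_{(N_i)}(y)`: the invariant measures for which `y` is quasi-generic along a
subsequence of `(N_i)`. -/
def VsetAlong (N : ℕ → ℕ) (y : BinSeq) : Set (Measure BinSeq) :=
  {μ | μ ∈ InvProb shift ∧ ∃ φ : ℕ → ℕ, StrictMono φ ∧ QuasiGenericAlong shift y (N ∘ φ) μ}

/-- `β` is the Bernoulli product measure on `{0,1}^ℤ` with `β({x : x₀ = 0}) = p`. -/
def IsBernoulli (p : ENNReal) (β : Measure BinSeq) : Prop :=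
  IsProbabilityMeasure β ∧ ∀ (s : Finset ℤ) (A : ℤ → Bool),
    β {x : BinSeq | ∀ i ∈ s, x i = A i} = ∏ i ∈ s, (if A i = false then p else 1 - p)


/-! ### Auxiliary development -/

section Aux

open Filter Topology MeasureTheory

/-- Agreement of two binary sequences on the window `[-M, M]`. -/
def agr1 (M : ℕ) (p q : BinSeq) : Prop := ∀ j : ℤ, j.natAbs ≤ M → p j = q j

/-- Agreement of two pairs on the window `[-M, M]`. -/
def agr2 (M : ℕ) (p q : BinSeq × BinSeq) : Prop := agr1 M p.1 q.1 ∧ agr1 M p.2 q.2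

/-- Agreement of two triples on the window `[-M, M]`. -/
def agr3 (M : ℕ) (p q : (BinSeq × BinSeq) × BinSeq) : Prop :=
  agr2 M p.1 q.1 ∧ agr1 M p.2 q.2

lemma agr1_refl (M : ℕ) (p : BinSeq) : agr1 M p p := fun _ _ => rfl

lemma agr1_symm {M : ℕ} {p q : BinSeq} (h : agr1 M p q) : agr1 M q p :=
  fun j hj => (h j hj).symm

lemma agr1_trans {M : ℕ} {p q r : BinSeq} (h : agr1 M p q) (h' : agr1 M q r) : agr1 M p r :=
  fun j hj => (h j hj).trans (h' j hj)

lemma agr1_mono {M M' : ℕ} (hMM : M ≤ M') {p q : BinSeq} (h : agr1 M' p q) : agr1 M p q :=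
  fun j hj => h j (hj.trans hMM)

lemma agr2_mono {M M' : ℕ} (hMM : M ≤ M') {p q : BinSeq × BinSeq} (h : agr2 M' p q) :
    agr2 M p q := ⟨agr1_mono hMM h.1, agr1_mono hMM h.2⟩

lemma agr3_mono {M M' : ℕ} (hMM : M ≤ M') {p q : (BinSeq × BinSeq) × BinSeq} (h : agr3 M' p q) :
    agr3 M p q := ⟨agr2_mono hMM h.1, agr1_mono hMM h.2⟩

lemma eq_of_agr1 {p q : BinSeq} (h : ∀ M, agr1 M p q) : p = q := by
  funext j
  exact h j.natAbs j le_rfl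

/-- Basic open cylinder neighborhoods in `BinSeq`. -/
lemma isOpen_cyl1 (M : ℕ) (z : BinSeq) : IsOpen {y : BinSeq | agr1 M y z} := by
  have : {y : BinSeq | agr1 M y z} =
      ⋂ j ∈ Finset.Icc (-(M:ℤ)) (M:ℤ), {y : BinSeq | y j = z j} := by
    ext y
    simp only [Set.mem_setOf_eq, Set.mem_iInter, Finset.mem_Icc, agr1]
    constructor
    · intro h j hj
      exact h j (by omega)
    · intro h j hj
      exact h j (by omega)
  rw [this]
  refine isOpen_biInter_finset fun j _ => ?_
  exact (isOpen_discrete {z j}).preimage (continuous_apply (A := fun _ : ℤ => Bool) j)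

lemma exists_window1 {O : Set BinSeq} (hO : IsOpen O) {z : BinSeq} (hz : z ∈ O) :
    ∃ M : ℕ, ∀ y, agr1 M y z → y ∈ O := by
  have h1 : O ∈ nhds z := hO.mem_nhds hz
  rw [nhds_pi, Filter.mem_pi] at h1
  obtain ⟨I, hIfin, t, ht, hsub⟩ := h1
  obtain ⟨F, hF⟩ := hIfin.exists_finset_coe
  refine ⟨F.sup (fun j => j.natAbs), fun y hy => ?_⟩
  apply hsub
  intro j hj
  have hjF : j ∈ F := by rwa [← hF] at hj
  have : y j = z j := hy j (Finset.le_sup (f := fun j => j.natAbs) hjF)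
  rw [this]
  exact mem_of_mem_nhds (ht j)

lemma exists_window2 {O : Set (BinSeq × BinSeq)} (hO : IsOpen O) {z : BinSeq × BinSeq}
    (hz : z ∈ O) : ∃ M : ℕ, ∀ y, agr2 M y z → y ∈ O := by
  obtain ⟨u, v, hu, hv, hzu, hzv, huv⟩ := isOpen_prod_iff.1 hO z.1 z.2 hz
  obtain ⟨M1, hM1⟩ := exists_window1 hu hzu
  obtain ⟨M2, hM2⟩ := exists_window1 hv hzv
  refine ⟨max M1 M2, fun y hy => ?_⟩
  have : (y.1, y.2) ∈ u ×ˢ v :=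
    ⟨hM1 _ (agr1_mono (le_max_left _ _) hy.1), hM2 _ (agr1_mono (le_max_right _ _) hy.2)⟩
  exact huv this

lemma exists_window3 {O : Set ((BinSeq × BinSeq) × BinSeq)} (hO : IsOpen O)
    {z : (BinSeq × BinSeq) × BinSeq} (hz : z ∈ O) :
    ∃ M : ℕ, ∀ y, agr3 M y z → y ∈ O := by
  obtain ⟨u, v, hu, hv, hzu, hzv, huv⟩ := isOpen_prod_iff.1 hO z.1 z.2 hz
  obtain ⟨M1, hM1⟩ := exists_window2 hu hzu
  obtain ⟨M2, hM2⟩ := exists_window1 hv hzv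
  refine ⟨max M1 M2, fun y hy => ?_⟩
  have : (y.1, y.2) ∈ u ×ˢ v :=
    ⟨hM1 _ (agr2_mono (le_max_left _ _) hy.1), hM2 _ (agr1_mono (le_max_right _ _) hy.2)⟩
  exact huv this

lemma mem_closure_agr1 {S : Set BinSeq} {z : BinSeq} :
    z ∈ closure S ↔ ∀ M : ℕ, ∃ s ∈ S, agr1 M s z := by
  constructor
  · intro hz M
    have := mem_closure_iff.1 hz _ (isOpen_cyl1 M z) (agr1_refl M z)
    obtain ⟨s, hs1, hs2⟩ := this
    exact ⟨s, hs2, hs1⟩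
  · intro h
    rw [mem_closure_iff]
    intro O hO hzO
    obtain ⟨M, hM⟩ := exists_window1 hO hzO
    obtain ⟨s, hsS, hs⟩ := h M
    exact ⟨s, hM s hs, hsS⟩

/-- Open cylinders in pairs. -/
lemma isOpen_cyl2 (M : ℕ) (z : BinSeq × BinSeq) : IsOpen {y : BinSeq × BinSeq | agr2 M y z} := by
  have : {y : BinSeq × BinSeq | agr2 M y z} =
      ({y : BinSeq | agr1 M y z.1} ×ˢ {y : BinSeq | agr1 M y z.2}) := by
    ext y; rfl
  rw [this]
  exact (isOpen_cyl1 M z.1).prod (isOpen_cyl1 M z.2)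

lemma mem_closure_agr2 {S : Set (BinSeq × BinSeq)} {z : BinSeq × BinSeq} :
    z ∈ closure S ↔ ∀ M : ℕ, ∃ s ∈ S, agr2 M s z := by
  constructor
  · intro hz M
    have := mem_closure_iff.1 hz _ (isOpen_cyl2 M z) ⟨agr1_refl M z.1, agr1_refl M z.2⟩
    obtain ⟨s, hs1, hs2⟩ := this
    exact ⟨s, hs2, hs1⟩
  · intro h
    rw [mem_closure_iff]
    intro O hO hzO
    obtain ⟨M, hM⟩ := exists_window2 hO hzO
    obtain ⟨s, hsS, hs⟩ := h M
    exact ⟨s, hM s hs, hsS⟩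

end Aux


section Aux2

open Filter Topology MeasureTheory

lemma shift_iter (y : BinSeq) (n : ℕ) : shift^[n] y = fun m => y (m + n) := by
  induction n with
  | zero => simp
  | succ k ih =>
    rw [Function.iterate_succ_apply', ih]
    funext m
    simp only [shift]
    congr 1
    push_cast
    ring

lemma shift2_iter (p : BinSeq × BinSeq) (n : ℕ) :
    shift2^[n] p = (fun m => p.1 (m + n), fun m => p.2 (m + n)) := by
  induction n with
  | zero => simp
  | succ k ih =>
    rw [Function.iterate_succ_apply', ih]
    simp only [shift2, Prod.map, shift]
    refine Prod.ext ?_ ?_ <;> (funext m; simp only [shift]; congr 1; push_cast; ring)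

lemma continuous_shift : Continuous shift := by
  apply continuous_pi
  intro n
  exact continuous_apply (A := fun _ : ℤ => Bool) (n + 1)

lemma continuous_shift2 : Continuous shift2 :=
  (continuous_shift.comp continuous_fst).prodMk (continuous_shift.comp continuous_snd)

lemma continuous_shift3 : Continuous shift3 :=
  (continuous_shift2.comp continuous_fst).prodMk (continuous_shift.comp continuous_snd)

lemma continuous_Nmap : Continuous Nmap := by
  apply continuous_pi
  intro n
  have h1 : Continuous fun t : (BinSeq × BinSeq) × BinSeq => (t.2 n, (t.1.2 n, t.1.1 n)) := by
    refine Continuous.prodMk ?_ (Continuous.prodMk ?_ ?_)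
    · exact (continuous_apply (A := fun _ : ℤ => Bool) n).comp continuous_snd
    · exact (continuous_apply (A := fun _ : ℤ => Bool) n).comp
        (continuous_snd.comp continuous_fst)
    · exact (continuous_apply (A := fun _ : ℤ => Bool) n).comp
        (continuous_fst.comp continuous_fst)
  have h2 : Continuous fun b : Bool × Bool × Bool => bif b.1 then b.2.1 else b.2.2 :=
    continuous_of_discreteTopology
  exact h2.comp h1

/-- Uniform continuity on the compact space of pairs. -/
lemma unif2 (f : C(BinSeq × BinSeq, ℝ)) {ε : ℝ} (hε : 0 < ε) :
    ∃ M : ℕ, ∀ p q : BinSeq × BinSeq, agr2 M p q → |f p - f q| ≤ ε := by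
  by_contra hcon
  push_neg at hcon
  set S : ℕ → Set ((BinSeq × BinSeq) × (BinSeq × BinSeq)) :=
    fun M => {pq | agr2 M pq.1 pq.2} ∩ {pq | ε ≤ |f pq.1 - f pq.2|} with hS
  have hclosed : ∀ M, IsClosed (S M) := by
    intro M
    apply IsClosed.inter
    · have : {pq : (BinSeq × BinSeq) × (BinSeq × BinSeq) | agr2 M pq.1 pq.2} =
          ⋂ j ∈ Finset.Icc (-(M:ℤ)) (M:ℤ),
            ({pq : (BinSeq × BinSeq) × (BinSeq × BinSeq) | pq.1.1 j = pq.2.1 j} ∩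
             {pq | pq.1.2 j = pq.2.2 j}) := by
        ext pq
        simp only [Set.mem_setOf_eq, Set.mem_iInter, Finset.mem_Icc, Set.mem_inter_iff, agr2,
          agr1]
        constructor
        · intro h j hj
          exact ⟨h.1 j (by omega), h.2 j (by omega)⟩
        · intro h
          exact ⟨fun j hj => (h j (by omega)).1, fun j hj => (h j (by omega)).2⟩
      rw [this]
      refine isClosed_biInter fun j _ => IsClosed.inter ?_ ?_ <;>
      · apply isClosed_eq <;>
        · apply Continuous.comp (continuous_apply (A := fun _ : ℤ => Bool) j)
          fun_prop
    · apply isClosed_le continuous_const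
      have : Continuous fun pq : (BinSeq × BinSeq) × (BinSeq × BinSeq) =>
          f pq.1 - f pq.2 := (f.continuous.comp continuous_fst).sub
        (f.continuous.comp continuous_snd)
      exact this.abs
  have hne : ∀ M, (S M).Nonempty := by
    intro M
    obtain ⟨p, q, hpq, hle⟩ := hcon M
    exact ⟨(p, q), hpq, hle.le⟩
  have hdec : ∀ M, S (M + 1) ⊆ S M := by
    intro M pq hpq
    exact ⟨agr2_mono (Nat.le_succ M) hpq.1, hpq.2⟩
  have hcpt : ∀ M, IsCompact (S M) := fun M => (hclosed M).isCompact
  obtain ⟨pq, hpq⟩ := IsCompact.nonempty_iInter_of_sequence_nonempty_isCompact_isClosed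
    S hdec hne (hcpt 0) hclosed
  simp only [Set.mem_iInter] at hpq
  have h1 : pq.1.1 = pq.2.1 := eq_of_agr1 fun M => (hpq M).1.1
  have h2 : pq.1.2 = pq.2.2 := eq_of_agr1 fun M => (hpq M).1.2
  have heq : pq.1 = pq.2 := Prod.ext h1 h2
  have hthis : ε ≤ |f pq.1 - f pq.2| := (hpq 0).2
  rw [heq, sub_self, abs_zero] at hthis
  linarith

/-- Uniform continuity on the compact space of triples. -/
lemma unif3 (f : C((BinSeq × BinSeq) × BinSeq, ℝ)) {ε : ℝ} (hε : 0 < ε) :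
    ∃ M : ℕ, ∀ p q : (BinSeq × BinSeq) × BinSeq, agr3 M p q → |f p - f q| ≤ ε := by
  by_contra hcon
  push_neg at hcon
  set S : ℕ → Set (((BinSeq × BinSeq) × BinSeq) × ((BinSeq × BinSeq) × BinSeq)) :=
    fun M => {pq | agr3 M pq.1 pq.2} ∩ {pq | ε ≤ |f pq.1 - f pq.2|} with hS
  have hclosed : ∀ M, IsClosed (S M) := by
    intro M
    apply IsClosed.inter
    · have : {pq : ((BinSeq × BinSeq) × BinSeq) × ((BinSeq × BinSeq) × BinSeq) |
          agr3 M pq.1 pq.2} =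
          ⋂ j ∈ Finset.Icc (-(M:ℤ)) (M:ℤ),
            ({pq : ((BinSeq × BinSeq) × BinSeq) × ((BinSeq × BinSeq) × BinSeq) |
                pq.1.1.1 j = pq.2.1.1 j} ∩
              {pq | pq.1.1.2 j = pq.2.1.2 j} ∩ {pq | pq.1.2 j = pq.2.2 j}) := by
        ext pq
        simp only [Set.mem_setOf_eq, Set.mem_iInter, Finset.mem_Icc, Set.mem_inter_iff, agr3,
          agr2, agr1]
        constructor
        · intro h j hj
          exact ⟨⟨h.1.1 j (by omega), h.1.2 j (by omega)⟩, h.2 j (by omega)⟩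
        · intro h
          exact ⟨⟨fun j hj => (h j (by omega)).1.1, fun j hj => (h j (by omega)).1.2⟩,
            fun j hj => (h j (by omega)).2⟩
      rw [this]
      refine isClosed_biInter fun j _ => IsClosed.inter (IsClosed.inter ?_ ?_) ?_ <;>
      · apply isClosed_eq <;>
        · apply Continuous.comp (continuous_apply (A := fun _ : ℤ => Bool) j)
          fun_prop
    · apply isClosed_le continuous_const
      have : Continuous fun pq : ((BinSeq × BinSeq) × BinSeq) × ((BinSeq × BinSeq) × BinSeq) =>
          f pq.1 - f pq.2 :=
        (f.continuous.comp continuous_fst).sub (f.continuous.comp continuous_snd)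
      exact this.abs
  have hne : ∀ M, (S M).Nonempty := by
    intro M
    obtain ⟨p, q, hpq, hle⟩ := hcon M
    exact ⟨(p, q), hpq, hle.le⟩
  have hdec : ∀ M, S (M + 1) ⊆ S M := by
    intro M pq hpq
    exact ⟨agr3_mono (Nat.le_succ M) hpq.1, hpq.2⟩
  have hcpt : ∀ M, IsCompact (S M) := fun M => (hclosed M).isCompact
  obtain ⟨pq, hpq⟩ := IsCompact.nonempty_iInter_of_sequence_nonempty_isCompact_isClosed
    S hdec hne (hcpt 0) hclosed
  simp only [Set.mem_iInter] at hpq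
  have h1 : pq.1.1.1 = pq.2.1.1 := eq_of_agr1 fun M => (hpq M).1.1.1
  have h2 : pq.1.1.2 = pq.2.1.2 := eq_of_agr1 fun M => (hpq M).1.1.2
  have h3 : pq.1.2 = pq.2.2 := eq_of_agr1 fun M => (hpq M).1.2
  have heq : pq.1 = pq.2 := Prod.ext (Prod.ext h1 h2) h3
  have hthis : ε ≤ |f pq.1 - f pq.2| := (hpq 0).2
  rw [heq, sub_self, abs_zero] at hthis
  linarith

end Aux2

section Aux3

open Filter Topology MeasureTheory

lemma wle_lemma {w : ℕ → BinSeq} {winf : BinSeq}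
    (hwmono : ∀ n : ℤ, Monotone (fun K => w K n))
    (hwlim : ∀ n : ℤ, ∃ K0, ∀ K ≥ K0, w K n = winf n) (K : ℕ) (n : ℤ) :
    w K n ≤ winf n := by
  obtain ⟨K0, h⟩ := hwlim n
  calc w K n ≤ w (max K K0) n := hwmono n (le_max_left _ _)
    _ = winf n := h _ (le_max_right _ _)

lemma xge_lemma {x : ℕ → BinSeq} {xinf : BinSeq}
    (hxmono : ∀ n : ℤ, Antitone (fun K => x K n))
    (hxlim : ∀ n : ℤ, ∃ K0, ∀ K ≥ K0, x K n = xinf n) (K : ℕ) (n : ℤ) :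
    xinf n ≤ x K n := by
  obtain ⟨K0, h⟩ := hxlim n
  calc xinf n = x (max K K0) n := (h _ (le_max_right _ _)).symm
    _ ≤ x K n := hxmono n (le_max_left _ _)

lemma measOn_mono {X Y : Set BinSeq} (h : X ⊆ Y) : MeasOn X ⊆ MeasOn Y := by
  rintro μ ⟨hμ, hX⟩
  haveI := hμ.1
  refine ⟨hμ, le_antisymm prob_le_one ?_⟩
  rw [← hX]
  exact measure_mono h

lemma measOn_iInter (X : ℕ → Set BinSeq) (hcl : ∀ K, IsClosed (X K)) :
    MeasOn (⋂ K, X K) = ⋂ K, MeasOn (X K) := by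
  ext μ
  simp only [Set.mem_iInter]
  constructor
  · rintro ⟨hμ, h1⟩ K
    haveI := hμ.1
    refine ⟨hμ, le_antisymm prob_le_one ?_⟩
    rw [← h1]
    exact measure_mono (Set.iInter_subset X K)
  · intro h
    refine ⟨(h 0).1, ?_⟩
    haveI := (h 0).1.1
    rw [← prob_compl_eq_zero_iff (MeasurableSet.iInter fun K => (hcl K).measurableSet)]
    rw [Set.compl_iInter]
    refine measure_iUnion_null fun K => ?_
    rw [prob_compl_eq_zero_iff (hcl K).measurableSet]
    exact (h K).2

lemma sandwichSet_mono {w x w' x' : BinSeq} (hw : ∀ n, w' n ≤ w n) (hx : ∀ n, x n ≤ x' n) :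
    sandwichSet w x ⊆ sandwichSet w' x' := by
  rintro z ⟨k, y, h1, h2, rfl⟩
  exact ⟨k, y, fun n => (hw n).trans (h1 n), fun n => (h2 n).trans (hx n), rfl⟩

/-- The set `{p : p.1 m = 0, p.2 m = 1}`. -/
def Aset (m : ℤ) : Set (BinSeq × BinSeq) := {p | p.1 m = false ∧ p.2 m = true}

lemma measurable_Aset (m : ℤ) : MeasurableSet (Aset m) := by
  have h1 : Measurable fun p : BinSeq × BinSeq => p.1 m :=
    (measurable_pi_apply m).comp measurable_fst
  have h2 : Measurable fun p : BinSeq × BinSeq => p.2 m :=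
    (measurable_pi_apply m).comp measurable_snd
  have : Aset m = ((fun p : BinSeq × BinSeq => p.1 m) ⁻¹' {false}) ∩
      ((fun p : BinSeq × BinSeq => p.2 m) ⁻¹' {true}) := by
    ext p; simp [Aset]
  rw [this]
  exact (h1 (measurableSet_singleton false)).inter (h2 (measurableSet_singleton true))

/-- The indicator of `Aset m` as a continuous map. -/
noncomputable def cylFn (m : ℤ) : C(BinSeq × BinSeq, ℝ) :=
  ⟨fun p => if p.1 m = false ∧ p.2 m = true then 1 else 0, by
    have h1 : Continuous fun p : BinSeq × BinSeq => (p.1 m, p.2 m) :=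
      ((continuous_apply (A := fun _ : ℤ => Bool) m).comp continuous_fst).prodMk
        ((continuous_apply (A := fun _ : ℤ => Bool) m).comp continuous_snd)
    have h2 : Continuous fun b : Bool × Bool => if b.1 = false ∧ b.2 = true then (1:ℝ) else 0 :=
      continuous_of_discreteTopology
    exact h2.comp h1⟩

lemma cylFn_eq_indicator (m : ℤ) :
    (cylFn m : BinSeq × BinSeq → ℝ) = (Aset m).indicator (fun _ => (1:ℝ)) := by
  funext p
  by_cases h : p ∈ Aset m
  · simp only [cylFn, ContinuousMap.coe_mk, Set.indicator_of_mem h]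
    exact if_pos h
  · simp only [cylFn, ContinuousMap.coe_mk, Set.indicator_of_notMem h]
    exact if_neg h

lemma integral_cylFn (m : ℤ) (ρ : Measure (BinSeq × BinSeq)) :
    ∫ p, cylFn m p ∂ρ = (ρ (Aset m)).toReal := by
  rw [show (fun p => cylFn m p) = (Aset m).indicator (fun _ => (1:ℝ)) from cylFn_eq_indicator m]
  rw [integral_indicator_const (1:ℝ) (measurable_Aset m)]
  simp [Measure.real]

lemma Aset_invariant {ρ : Measure (BinSeq × BinSeq)} (hρ : Measure.map shift2 ρ = ρ) (m : ℤ) :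
    ρ (Aset m) = ρ (Aset 0) := by
  have step : ∀ m : ℤ, ρ (Aset (m + 1)) = ρ (Aset m) := by
    intro m
    have hpre : Aset (m + 1) = shift2 ⁻¹' (Aset m) := by
      ext p
      simp [Aset, shift2, shift, Prod.map]
    rw [hpre, ← Measure.map_apply continuous_shift2.measurable (measurable_Aset m), hρ]
  induction m using Int.induction_on with
  | zero => rfl
  | succ k ih => rw [step k, ih]
  | pred k ih =>
    have := step (-(k:ℤ) - 1)
    simp only [sub_add_cancel] at this
    rw [← this, ih]

end Aux3

section Aux4

open Filter Topology MeasureTheory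

lemma bool_le_false {b : Bool} (h : b ≤ false) : b = false := by
  cases b
  · rfl
  · exact absurd h (by decide)

lemma bool_true_le {b : Bool} (h : true ≤ b) : b = true := by
  cases b
  · exact absurd h (by decide)
  · rfl

/-- Weak convergence of the base measures, from the density hypothesis. -/
lemma rho_tendsto (w x : ℕ → BinSeq) (winf xinf : BinSeq) (N : ℕ → ℕ)
    (ρ : ℕ → Measure (BinSeq × BinSeq)) (ρinf : Measure (BinSeq × BinSeq))
    (hwx : ∀ K, leSeq (w K) (x K))
    (hwmono : ∀ n : ℤ, Monotone (fun K => w K n))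
    (hxmono : ∀ n : ℤ, Antitone (fun K => x K n))
    (hwlim : ∀ n : ℤ, ∃ K0, ∀ K ≥ K0, w K n = winf n)
    (hxlim : ∀ n : ℤ, ∃ K0, ∀ K ≥ K0, x K n = xinf n)
    (hN : StrictMono N)
    (hP : ∀ K, ρ K ∈ InvProb shift2) (hPinf : ρinf ∈ InvProb shift2)
    (hqg : ∀ K, QuasiGenericAlong shift2 (w K, x K) N (ρ K))
    (hqginf : QuasiGenericAlong shift2 (winf, xinf) N ρinf)
    (hdens : Filter.Tendsto
      (fun K => ((ρ K) (Aset 0)).toReal) Filter.atTop (nhds ((ρinf (Aset 0)).toReal)))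
    (f : C(BinSeq × BinSeq, ℝ)) :
    Tendsto (fun K => ∫ p, f p ∂(ρ K)) atTop (𝓝 (∫ p, f p ∂ρinf)) := by
  have hord : ∀ (K : ℕ) (j : ℤ), w K j ≤ winf j ∧ winf j ≤ xinf j ∧ xinf j ≤ x K j := by
    intro K j
    refine ⟨wle_lemma hwmono hwlim K j, ?_, xge_lemma hxmono hxlim K j⟩
    obtain ⟨K1, h1⟩ := hwlim j
    obtain ⟨K2, h2⟩ := hxlim j
    calc winf j = w (max K1 K2) j := (h1 _ (le_max_left _ _)).symm
      _ ≤ x (max K1 K2) j := hwx _ j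
      _ = xinf j := h2 _ (le_max_right _ _)
  -- pointwise comparison of indicator values
  have hgsub : ∀ (K : ℕ) (j : ℤ),
      (if winf j = false ∧ xinf j = true then (1:ℝ) else 0) ≤
      (if w K j = false ∧ x K j = true then (1:ℝ) else 0) := by
    intro K j
    by_cases h : winf j = false ∧ xinf j = true
    · have hw : w K j = false := by
        have := (hord K j).1
        rw [h.1] at this
        exact bool_le_false this
      have hx : x K j = true := by
        have := (hord K j).2.2
        rw [h.2] at this
        exact bool_true_le this
      rw [if_pos h, if_pos ⟨hw, hx⟩]
    · rw [if_neg h]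
      positivity
  have hdis : ∀ (K : ℕ) (j : ℤ), ¬(w K j = winf j ∧ x K j = xinf j) →
      (w K j = false ∧ x K j = true) ∧ ¬(winf j = false ∧ xinf j = true) := by
    intro K j hne
    obtain ⟨h1, h2, h3⟩ := hord K j
    revert h1 h2 h3 hne
    generalize w K j = a
    generalize winf j = b
    generalize xinf j = c
    generalize x K j = d
    revert a b c d
    decide
  rw [Metric.tendsto_atTop]
  intro ε hε
  have hε3 : (0:ℝ) < ε/3 := by linarith
  obtain ⟨M, hM⟩ := unif2 f hε3
  set F := Finset.Icc (-(M:ℤ)) (M:ℤ) with hF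
  set c : ℝ := 2 * ‖f‖ * (F.card : ℝ) with hc
  have hcnn : 0 ≤ c := by positivity
  -- the crucial uniform estimate
  have key : ∀ K : ℕ, |(∫ p, f p ∂(ρ K)) - ∫ p, f p ∂ρinf| ≤
      ε/3 + c * (((ρ K) (Aset 0)).toReal - (ρinf (Aset 0)).toReal) := by
    intro K
    set p : BinSeq × BinSeq := (w K, x K) with hp
    set q : BinSeq × BinSeq := (winf, xinf) with hq
    have hcyl_p : ∀ (m : ℤ) (t : ℕ), cylFn m (shift2^[t] p) =
        (if w K (m + t) = false ∧ x K (m + t) = true then (1:ℝ) else 0) := by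
      intro m t
      rw [shift2_iter]
      rfl
    have hcyl_q : ∀ (m : ℤ) (t : ℕ), cylFn m (shift2^[t] q) =
        (if winf (m + t) = false ∧ xinf (m + t) = true then (1:ℝ) else 0) := by
      intro m t
      rw [shift2_iter]
      rfl
    -- pointwise estimate along the orbit
    have hpt : ∀ t : ℕ, |f (shift2^[t] p) - f (shift2^[t] q)| ≤
        ε/3 + 2 * ‖f‖ * ∑ m ∈ F, (cylFn m (shift2^[t] p) - cylFn m (shift2^[t] q)) := by
      intro t
      have hterm_nn : ∀ m ∈ F, 0 ≤ cylFn m (shift2^[t] p) - cylFn m (shift2^[t] q) := by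
        intro m _
        rw [hcyl_p, hcyl_q, sub_nonneg]
        exact hgsub K (m + t)
      have hsum_nn : 0 ≤ ∑ m ∈ F, (cylFn m (shift2^[t] p) - cylFn m (shift2^[t] q)) :=
        Finset.sum_nonneg hterm_nn
      by_cases hagree : ∀ m ∈ F, w K (m + t) = winf (m + t) ∧ x K (m + t) = xinf (m + t)
      · have hag : agr2 M (shift2^[t] p) (shift2^[t] q) := by
          constructor <;>
          · intro j hj
            rw [shift2_iter, shift2_iter]
            have hjF : j ∈ F := by
              rw [hF, Finset.mem_Icc]
              omega
            first
              | exact (hagree j hjF).1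
              | exact (hagree j hjF).2
        calc |f (shift2^[t] p) - f (shift2^[t] q)| ≤ ε/3 := hM _ _ hag
          _ ≤ _ := le_add_of_nonneg_right (by positivity)
      · push_neg at hagree
        obtain ⟨m0, hm0F, hm0⟩ := hagree
        have hne : ¬(w K (m0 + t) = winf (m0 + t) ∧ x K (m0 + t) = xinf (m0 + t)) := by
          intro hcontra
          exact hm0 hcontra.1 hcontra.2
        obtain ⟨hKc, hIc⟩ := hdis K (m0 + t) hne
        have hone : cylFn m0 (shift2^[t] p) - cylFn m0 (shift2^[t] q) = 1 := by
          rw [hcyl_p, hcyl_q, if_pos hKc, if_neg hIc, sub_zero]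
        have hsum_ge : (1:ℝ) ≤ ∑ m ∈ F, (cylFn m (shift2^[t] p) - cylFn m (shift2^[t] q)) := by
          rw [← hone]
          exact Finset.single_le_sum hterm_nn hm0F
        have habs : |f (shift2^[t] p) - f (shift2^[t] q)| ≤ 2 * ‖f‖ := by
          rw [sub_eq_add_neg]
          calc |f (shift2^[t] p) + -(f (shift2^[t] q))| ≤
              |f (shift2^[t] p)| + |-(f (shift2^[t] q))| := abs_add_le _ _
            _ = |f (shift2^[t] p)| + |f (shift2^[t] q)| := by rw [abs_neg]
            _ ≤ ‖f‖ + ‖f‖ := by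
                have h1 := f.norm_coe_le_norm (shift2^[t] p)
                have h2 := f.norm_coe_le_norm (shift2^[t] q)
                rw [Real.norm_eq_abs] at h1 h2
                linarith
            _ = 2 * ‖f‖ := by ring
        calc |f (shift2^[t] p) - f (shift2^[t] q)| ≤ 2 * ‖f‖ := habs
          _ = 2 * ‖f‖ * 1 := by ring
          _ ≤ 2 * ‖f‖ * ∑ m ∈ F, (cylFn m (shift2^[t] p) - cylFn m (shift2^[t] q)) := by
              apply mul_le_mul_of_nonneg_left hsum_ge
              positivity
          _ ≤ _ := le_add_of_nonneg_left (by positivity)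
    -- averaged estimate
    have hineq : ∀ i : ℕ, 1 ≤ N i →
        |birkAvg shift2 p (N i) f - birkAvg shift2 q (N i) f| ≤
        ε/3 + 2 * ‖f‖ * ∑ m ∈ F,
          (birkAvg shift2 p (N i) (cylFn m) - birkAvg shift2 q (N i) (cylFn m)) := by
      intro i hi
      set n : ℕ := N i with hn
      have hn0 : (0:ℝ) < (n:ℝ) := by exact_mod_cast hi
      have hstep : ∀ g : C(BinSeq × BinSeq, ℝ),
          birkAvg shift2 p n g - birkAvg shift2 q n g =
          (∑ t ∈ Finset.range n, (g (shift2^[t] p) - g (shift2^[t] q))) / n := by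
        intro g
        unfold birkAvg
        rw [div_sub_div_same, Finset.sum_sub_distrib]
      rw [hstep]
      rw [abs_div, abs_of_nonneg hn0.le]
      have hnum : |∑ t ∈ Finset.range n, (f (shift2^[t] p) - f (shift2^[t] q))| ≤
          (n:ℝ) * (ε/3) + 2 * ‖f‖ *
            ∑ t ∈ Finset.range n, ∑ m ∈ F,
              (cylFn m (shift2^[t] p) - cylFn m (shift2^[t] q)) := by
        calc |∑ t ∈ Finset.range n, (f (shift2^[t] p) - f (shift2^[t] q))| ≤
            ∑ t ∈ Finset.range n, |f (shift2^[t] p) - f (shift2^[t] q)| :=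
              Finset.abs_sum_le_sum_abs _ _
          _ ≤ ∑ t ∈ Finset.range n, (ε/3 + 2 * ‖f‖ *
              ∑ m ∈ F, (cylFn m (shift2^[t] p) - cylFn m (shift2^[t] q))) :=
              Finset.sum_le_sum fun t _ => hpt t
          _ = (n:ℝ) * (ε/3) + 2 * ‖f‖ *
              ∑ t ∈ Finset.range n, ∑ m ∈ F,
                (cylFn m (shift2^[t] p) - cylFn m (shift2^[t] q)) := by
              rw [Finset.sum_add_distrib, Finset.sum_const, Finset.card_range,
                nsmul_eq_mul, ← Finset.mul_sum]
      calc (|∑ t ∈ Finset.range n, (f (shift2^[t] p) - f (shift2^[t] q))|) / n ≤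
          ((n:ℝ) * (ε/3) + 2 * ‖f‖ *
            ∑ t ∈ Finset.range n, ∑ m ∈ F,
              (cylFn m (shift2^[t] p) - cylFn m (shift2^[t] q))) / n := by
            exact div_le_div_of_nonneg_right hnum hn0.le |>.trans_eq rfl
        _ = ε/3 + 2 * ‖f‖ * ∑ m ∈ F,
            (birkAvg shift2 p n (cylFn m) - birkAvg shift2 q n (cylFn m)) := by
            rw [add_div, mul_div_cancel_left₀ _ hn0.ne']
            congr 1
            rw [mul_div_assoc]
            congr 1
            rw [Finset.sum_comm, Finset.sum_div]
            refine Finset.sum_congr rfl fun m _ => ?_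
            rw [hstep (cylFn m)]
    -- pass to the limit i → ∞
    have hlimL : Tendsto (fun i => |birkAvg shift2 p (N i) f - birkAvg shift2 q (N i) f|)
        atTop (𝓝 |(∫ p', f p' ∂(ρ K)) - ∫ p', f p' ∂ρinf|) :=
      ((hqg K f).sub (hqginf f)).abs
    have hlimR : Tendsto (fun i => ε/3 + 2 * ‖f‖ * ∑ m ∈ F,
        (birkAvg shift2 p (N i) (cylFn m) - birkAvg shift2 q (N i) (cylFn m))) atTop
        (𝓝 (ε/3 + 2 * ‖f‖ * ∑ m ∈ F,
          (((ρ K) (Aset m)).toReal - (ρinf (Aset m)).toReal))) := by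
      apply tendsto_const_nhds.add
      apply Tendsto.const_mul
      apply tendsto_finset_sum
      intro m _
      have h1 := (hqg K (cylFn m)).sub (hqginf (cylFn m))
      rwa [integral_cylFn, integral_cylFn] at h1
    have hfin := le_of_tendsto_of_tendsto hlimL hlimR ?_
    · refine hfin.trans (le_of_eq ?_)
      congr 1
      rw [hc]
      have : ∀ m ∈ F, ((ρ K) (Aset m)).toReal - (ρinf (Aset m)).toReal =
          ((ρ K) (Aset 0)).toReal - (ρinf (Aset 0)).toReal := by
        intro m _
        rw [Aset_invariant (hP K).2 m, Aset_invariant hPinf.2 m]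
      rw [Finset.sum_congr rfl this, Finset.sum_const, nsmul_eq_mul]
      ring
    · filter_upwards [eventually_ge_atTop 1] with i hi
      exact hineq i (le_trans hi hN.le_apply)
  -- conclude using hdens
  have hd0 : Tendsto (fun K => c * (((ρ K) (Aset 0)).toReal - (ρinf (Aset 0)).toReal))
      atTop (𝓝 0) := by
    have h1 : Tendsto (fun K => ((ρ K) (Aset 0)).toReal - (ρinf (Aset 0)).toReal)
        atTop (𝓝 0) := by
      have := hdens.sub_const ((ρinf (Aset 0)).toReal)
      rwa [sub_self] at this
    have := h1.const_mul c
    rwa [mul_zero] at this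
  rw [Metric.tendsto_atTop] at hd0
  obtain ⟨K0, hK0⟩ := hd0 (ε/3) hε3
  refine ⟨K0, fun K hK => ?_⟩
  have h1 := hK0 K hK
  rw [Real.dist_eq, sub_zero] at h1
  rw [Real.dist_eq]
  calc |(∫ p, f p ∂(ρ K)) - ∫ p, f p ∂ρinf| ≤
      ε/3 + c * (((ρ K) (Aset 0)).toReal - (ρinf (Aset 0)).toReal) := key K
    _ ≤ ε/3 + |c * (((ρ K) (Aset 0)).toReal - (ρinf (Aset 0)).toReal)| := by
        have := le_abs_self (c * (((ρ K) (Aset 0)).toReal - (ρinf (Aset 0)).toReal))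
        linarith
    _ < ε/3 + ε/3 := by linarith
    _ < ε := by linarith

end Aux4

section MeasLim

open Filter Topology MeasureTheory TopologicalSpace
open scoped ENNReal NNReal

abbrev Om3 := (BinSeq × BinSeq) × BinSeq

abbrev Win (M : ℕ) := {j : ℤ // j ∈ Finset.Icc (-(M:ℤ)) (M:ℤ)}

abbrev Gam (M : ℕ) := (Win M → Bool) × (Win M → Bool) × (Win M → Bool)

/-- Restriction of a triple to the window `[-M, M]`. -/
def res3 (M : ℕ) (t : Om3) : Gam M :=
  (fun j => t.1.1 j, fun j => t.1.2 j, fun j => t.2 j)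

lemma continuous_res3 (M : ℕ) : Continuous (res3 M) := by
  unfold res3
  refine Continuous.prodMk ?_ (Continuous.prodMk ?_ ?_) <;>
    refine continuous_pi fun j => ?_
  · exact (continuous_apply (A := fun _ : ℤ => Bool) (j : ℤ)).comp
      (continuous_fst.comp continuous_fst)
  · exact (continuous_apply (A := fun _ : ℤ => Bool) (j : ℤ)).comp
      (continuous_snd.comp continuous_fst)
  · exact (continuous_apply (A := fun _ : ℤ => Bool) (j : ℤ)).comp continuous_snd

lemma agr3_iff_res3 {M : ℕ} {s t : Om3} : agr3 M s t ↔ res3 M s = res3 M t := by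
  constructor
  · intro h
    refine Prod.ext (funext fun j => ?_) (Prod.ext (funext fun j => ?_) (funext fun j => ?_)) <;>
    · have hj : (j : ℤ).natAbs ≤ M := by
        have := j.2
        rw [Finset.mem_Icc] at this
        omega
      first
        | exact h.1.1 _ hj
        | exact h.1.2 _ hj
        | exact h.2 _ hj
  · intro h
    have h1 := congrArg Prod.fst h
    have h2 := congrArg (fun g => g.2.1) h
    have h3 := congrArg (fun g => g.2.2) h
    refine ⟨⟨fun j hj => ?_, fun j hj => ?_⟩, fun j hj => ?_⟩ <;>
    · have hjm : j ∈ Finset.Icc (-(M:ℤ)) (M:ℤ) := by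
        rw [Finset.mem_Icc]
        omega
      first
        | exact congrFun h1 ⟨j, hjm⟩
        | exact congrFun h2 ⟨j, hjm⟩
        | exact congrFun h3 ⟨j, hjm⟩

lemma agr3_refl (M : ℕ) (t : Om3) : agr3 M t t := ⟨⟨fun _ _ => rfl, fun _ _ => rfl⟩, fun _ _ => rfl⟩

lemma agr3_symm {M : ℕ} {s t : Om3} (h : agr3 M s t) : agr3 M t s :=
  ⟨⟨agr1_symm h.1.1, agr1_symm h.1.2⟩, agr1_symm h.2⟩

lemma agr3_trans {M : ℕ} {s t u : Om3} (h : agr3 M s t) (h' : agr3 M t u) : agr3 M s u :=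
  ⟨⟨agr1_trans h.1.1 h'.1.1, agr1_trans h.1.2 h'.1.2⟩, agr1_trans h.2 h'.2⟩

lemma eq_of_agr3 {s t : Om3} (h : ∀ M, agr3 M s t) : s = t :=
  Prod.ext (Prod.ext (eq_of_agr1 fun M => (h M).1.1) (eq_of_agr1 fun M => (h M).1.2))
    (eq_of_agr1 fun M => (h M).2)

/-- Saturation of a set by the window-`M` cylinder partition. -/
def sat3 (M : ℕ) (S : Set Om3) : Set Om3 := res3 M ⁻¹' (res3 M '' S)

lemma subset_sat3 (M : ℕ) (S : Set Om3) : S ⊆ sat3 M S := fun t ht => ⟨t, ht, rfl⟩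

lemma mem_sat3 {M : ℕ} {S : Set Om3} {t : Om3} : t ∈ sat3 M S ↔ ∃ s ∈ S, agr3 M s t := by
  constructor
  · rintro ⟨s, hs, heq⟩
    exact ⟨s, hs, agr3_iff_res3.2 heq⟩
  · rintro ⟨s, hs, hagr⟩
    exact ⟨s, hs, agr3_iff_res3.1 hagr⟩

lemma isClopen_sat3 (M : ℕ) (S : Set Om3) : IsClopen (sat3 M S) :=
  ⟨(isClosed_discrete _).preimage (continuous_res3 M),
   (isOpen_discrete _).preimage (continuous_res3 M)⟩

lemma measurableSet_sat3 (M : ℕ) (S : Set Om3) : MeasurableSet (sat3 M S) :=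
  (isClopen_sat3 M S).2.measurableSet

lemma sat3_mono_set {M : ℕ} {S T : Set Om3} (h : S ⊆ T) : sat3 M S ⊆ sat3 M T :=
  Set.preimage_mono (Set.image_mono h)

lemma sat3_anti {M M' : ℕ} (h : M ≤ M') (S : Set Om3) : sat3 M' S ⊆ sat3 M S := by
  intro t ht
  rw [mem_sat3] at ht ⊢
  obtain ⟨s, hs, hagr⟩ := ht
  exact ⟨s, hs, agr3_mono h hagr⟩

lemma sat3_union (M : ℕ) (S T : Set Om3) : sat3 M (S ∪ T) = sat3 M S ∪ sat3 M T := by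
  unfold sat3
  rw [Set.image_union, Set.preimage_union]

lemma sat3_sat3 {M M' : ℕ} (h : M ≤ M') (S : Set Om3) : sat3 M' (sat3 M S) = sat3 M S := by
  refine le_antisymm ?_ (subset_sat3 M' _)
  intro t ht
  rw [mem_sat3] at ht
  obtain ⟨s, hs, hagr⟩ := ht
  rw [mem_sat3] at hs ⊢
  obtain ⟨u, hu, hagr'⟩ := hs
  exact ⟨u, hu, agr3_trans hagr' (agr3_mono h hagr)⟩

lemma isOpen_cyl3 (M : ℕ) (z : Om3) : IsOpen {y : Om3 | agr3 M y z} := by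
  have : {y : Om3 | agr3 M y z} = res3 M ⁻¹' {res3 M z} := by
    ext y
    simp only [Set.mem_setOf_eq, Set.mem_preimage, Set.mem_singleton_iff]
    exact agr3_iff_res3
  rw [this]
  exact (isOpen_discrete _).preimage (continuous_res3 M)

lemma mem_closure_agr3 {S : Set Om3} {z : Om3} :
    z ∈ closure S ↔ ∀ M : ℕ, ∃ s ∈ S, agr3 M s z := by
  constructor
  · intro hz M
    obtain ⟨s, hs1, hs2⟩ := mem_closure_iff.1 hz _ (isOpen_cyl3 M z) (agr3_refl M z)
    exact ⟨s, hs2, hs1⟩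
  · intro h
    rw [mem_closure_iff]
    intro O hO hzO
    obtain ⟨M, hM⟩ := exists_window3 hO hzO
    obtain ⟨s, hsS, hs⟩ := h M
    exact ⟨s, hM s hs, hsS⟩

lemma iInter_sat3 (S : Set Om3) : ⋂ M, sat3 M S = closure S := by
  refine le_antisymm ?_ ?_
  · intro t ht
    rw [Set.mem_iInter] at ht
    rw [mem_closure_agr3]
    intro M
    exact mem_sat3.1 (ht M)
  · refine Set.subset_iInter fun M => ?_
    exact closure_minimal (subset_sat3 M S) (isClopen_sat3 M S).1

/-- Disjoint closed sets are separated by some cylinder saturation. -/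
lemma sep3 {K1 K2 : Set Om3} (h1 : IsClosed K1) (h2 : IsClosed K2) (hd : Disjoint K1 K2) :
    ∃ M0 : ℕ, Disjoint (sat3 M0 K1) (sat3 M0 K2) := by
  by_contra hcon
  push_neg at hcon
  set S : ℕ → Set (Om3 × Om3) :=
    fun M => (K1 ×ˢ K2) ∩ {pq | res3 M pq.1 = res3 M pq.2} with hS
  have hclosed : ∀ M, IsClosed (S M) := by
    intro M
    refine IsClosed.inter (h1.prod h2) ?_
    exact isClosed_eq ((continuous_res3 M).comp continuous_fst)
      ((continuous_res3 M).comp continuous_snd)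
  have hne : ∀ M, (S M).Nonempty := by
    intro M
    obtain ⟨t, ht1, ht2⟩ := Set.not_disjoint_iff.1 (hcon M)
    obtain ⟨s1, hs1, hagr1⟩ := mem_sat3.1 ht1
    obtain ⟨s2, hs2, hagr2⟩ := mem_sat3.1 ht2
    refine ⟨(s1, s2), ⟨hs1, hs2⟩, ?_⟩
    show res3 M s1 = res3 M s2
    exact agr3_iff_res3.1 (agr3_trans hagr1 (agr3_symm hagr2))
  have hdec : ∀ M, S (M + 1) ⊆ S M := by
    intro M pq hpq
    refine ⟨hpq.1, ?_⟩
    show res3 M pq.1 = res3 M pq.2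
    exact agr3_iff_res3.1 (agr3_mono (Nat.le_succ M) (agr3_iff_res3.2 hpq.2))
  obtain ⟨pq, hpq⟩ := IsCompact.nonempty_iInter_of_sequence_nonempty_isCompact_isClosed
    S hdec hne (hclosed 0).isCompact hclosed
  simp only [Set.mem_iInter] at hpq
  have heq : pq.1 = pq.2 := eq_of_agr3 fun M => agr3_iff_res3.2 (hpq M).2
  have h1' : pq.1 ∈ K1 := (hpq 0).1.1
  have h2' : pq.2 ∈ K2 := (hpq 0).1.2
  rw [heq] at h1'
  exact Set.not_disjoint_iff.2 ⟨pq.2, h1', h2'⟩ hd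

/-! ### Ultrafilter limits in `ℝ≥0∞` -/

noncomputable def ulim (U : Ultrafilter ℕ) (a : ℕ → ℝ≥0∞) : ℝ≥0∞ :=
  lim (Filter.map a U)

lemma tendsto_ulim (U : Ultrafilter ℕ) (a : ℕ → ℝ≥0∞) : Tendsto a U (𝓝 (ulim U a)) := by
  obtain ⟨x, -, hx⟩ := isCompact_univ.ultrafilter_le_nhds (U.map a) (by simp)
  rw [Ultrafilter.coe_map] at hx
  exact le_nhds_lim ⟨x, hx⟩

lemma ulim_eq {U : Ultrafilter ℕ} {a : ℕ → ℝ≥0∞} {x : ℝ≥0∞} (h : Tendsto a U (𝓝 x)) :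
    ulim U a = x :=
  tendsto_nhds_unique (tendsto_ulim U a) h

lemma ulim_const (U : Ultrafilter ℕ) (x : ℝ≥0∞) : ulim U (fun _ => x) = x :=
  ulim_eq tendsto_const_nhds

lemma ulim_le {U : Ultrafilter ℕ} {a b : ℕ → ℝ≥0∞} (h : ∀ j, a j ≤ b j) :
    ulim U a ≤ ulim U b :=
  le_of_tendsto_of_tendsto (tendsto_ulim U a) (tendsto_ulim U b) (Eventually.of_forall h)

lemma ulim_le_const {U : Ultrafilter ℕ} {a : ℕ → ℝ≥0∞} {x : ℝ≥0∞} (h : ∀ j, a j ≤ x) :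
    ulim U a ≤ x := by
  rw [← ulim_const U x]
  exact ulim_le h

lemma ulim_add (U : Ultrafilter ℕ) (a b : ℕ → ℝ≥0∞) :
    ulim U (fun j => a j + b j) = ulim U a + ulim U b :=
  ulim_eq ((tendsto_ulim U a).add (tendsto_ulim U b))

/-! ### The limit content and limit measure -/

variable (U : Ultrafilter ℕ) (κ : ℕ → Measure Om3)

/-- `ν_M(S)`: ultrafilter limit of the `κ j`-measures of the `M`-saturation of `S`. -/
noncomputable def nuM (M : ℕ) (S : Set Om3) : ℝ≥0∞ := ulim U (fun j => κ j (sat3 M S))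

noncomputable def contFun (S : Set Om3) : ℝ≥0∞ := ⨅ M, nuM U κ M S

lemma nuM_le_one (hκ : ∀ j, IsProbabilityMeasure (κ j)) (M : ℕ) (S : Set Om3) : nuM U κ M S ≤ 1 := by
  refine ulim_le_const fun j => ?_
  haveI := hκ j
  exact prob_le_one

lemma nuM_anti {M M' : ℕ} (h : M ≤ M') (S : Set Om3) : nuM U κ M' S ≤ nuM U κ M S :=
  ulim_le fun j => measure_mono (sat3_anti h S)

lemma nuM_mono {M : ℕ} {S T : Set Om3} (h : S ⊆ T) : nuM U κ M S ≤ nuM U κ M T :=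
  ulim_le fun j => measure_mono (sat3_mono_set h)

lemma contFun_le_one (hκ : ∀ j, IsProbabilityMeasure (κ j)) (S : Set Om3) : contFun U κ S ≤ 1 :=
  (iInf_le _ 0).trans (nuM_le_one U κ hκ 0 S)

lemma contFun_ne_top (hκ : ∀ j, IsProbabilityMeasure (κ j)) (S : Set Om3) : contFun U κ S ≠ ⊤ :=
  ((contFun_le_one U κ hκ S).trans_lt ENNReal.one_lt_top).ne

lemma contFun_mono {S T : Set Om3} (h : S ⊆ T) : contFun U κ S ≤ contFun U κ T :=
  le_iInf fun M => (iInf_le _ M).trans (nuM_mono U κ h)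

/-- Shifted infimum of an antitone `ℕ`-indexed family. -/
lemma iInf_shift {a : ℕ → ℝ≥0∞} (ha : ∀ M M', M ≤ M' → a M' ≤ a M) (M0 : ℕ) :
    ⨅ M, a (M0 + M) = ⨅ M, a M := by
  refine le_antisymm ?_ ?_
  · exact le_iInf fun M => (iInf_le (fun M => a (M0 + M)) M).trans (ha M (M0 + M) (by omega))
  · exact le_iInf fun M => iInf_le a (M0 + M)

lemma contFun_union_le (S T : Set Om3) :
    contFun U κ (S ∪ T) ≤ contFun U κ S + contFun U κ T := by
  have h1 : ∀ M, nuM U κ M (S ∪ T) ≤ nuM U κ M S + nuM U κ M T := by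
    intro M
    rw [nuM, nuM, nuM, ← ulim_add U]
    refine ulim_le fun j => ?_
    rw [sat3_union]
    exact measure_union_le _ _
  rw [contFun, contFun, contFun, ENNReal.iInf_add_iInf ?_]
  · exact le_iInf fun M => (iInf_le _ M).trans (h1 M)
  · intro i j
    refine ⟨max i j, ?_⟩
    exact add_le_add (nuM_anti U κ (le_max_left i j) S) (nuM_anti U κ (le_max_right i j) T)

lemma contFun_union_disjoint {S T : Set Om3} (hS : IsClosed S) (hT : IsClosed T)
    (hd : Disjoint S T) :
    contFun U κ (S ∪ T) = contFun U κ S + contFun U κ T := by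
  refine le_antisymm (contFun_union_le U κ S T) ?_
  obtain ⟨M0, hM0⟩ := sep3 hS hT hd
  have hkey : ∀ M, M0 ≤ M → nuM U κ M (S ∪ T) = nuM U κ M S + nuM U κ M T := by
    intro M hM
    rw [nuM, nuM, nuM, ← ulim_add U]
    congr 1
    funext j
    rw [sat3_union]
    refine measure_union ?_ (measurableSet_sat3 M T)
    exact hM0.mono (sat3_anti hM S) (sat3_anti hM T)
  have ha : ∀ M M', M ≤ M' → nuM U κ M' (S ∪ T) ≤ nuM U κ M (S ∪ T) :=
    fun M M' h => nuM_anti U κ h _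
  have hb : ∀ M M', M ≤ M' → nuM U κ M' S + nuM U κ M' T ≤ nuM U κ M S + nuM U κ M T :=
    fun M M' h => add_le_add (nuM_anti U κ h S) (nuM_anti U κ h T)
  have heq2 : contFun U κ S + contFun U κ T = contFun U κ (S ∪ T) := by
    calc contFun U κ S + contFun U κ T
        = (⨅ M, nuM U κ (M0 + M) S) + ⨅ M, nuM U κ (M0 + M) T := by
          rw [contFun, contFun, iInf_shift (fun M M' h => nuM_anti U κ h S) M0,
            iInf_shift (fun M M' h => nuM_anti U κ h T) M0]
      _ = ⨅ M, (nuM U κ (M0 + M) S + nuM U κ (M0 + M) T) := by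
          rw [ENNReal.iInf_add_iInf]
          intro i j
          exact ⟨max i j, add_le_add (nuM_anti U κ (by omega) S) (nuM_anti U κ (by omega) T)⟩
      _ = ⨅ M, nuM U κ (M0 + M) (S ∪ T) := by
          refine iInf_congr fun M => ?_
          rw [hkey (M0 + M) (by omega)]
      _ = contFun U κ (S ∪ T) := by
          rw [contFun, iInf_shift (fun M M' h => nuM_anti U κ h (S ∪ T)) M0]
  exact le_of_eq heq2

/-- The limit content. -/
noncomputable def limContent (hκ : ∀ j, IsProbabilityMeasure (κ j)) : Content Om3 where
  toFun Kc := (contFun U κ Kc).toNNReal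
  mono' K1 K2 h := by
    have := contFun_mono U κ (S := K1) (T := K2) h
    exact ENNReal.toNNReal_mono (contFun_ne_top U κ hκ K2) this
  sup_disjoint' K1 K2 hd h1 h2 := by
    have heq := contFun_union_disjoint U κ h1 h2 hd
    have : (contFun U κ (↑K1 ∪ ↑K2)).toNNReal =
        (contFun U κ ↑K1 + contFun U κ ↑K2).toNNReal := by rw [heq]
    rw [ENNReal.toNNReal_add (contFun_ne_top U κ hκ _) (contFun_ne_top U κ hκ _)] at this
    exact this
  sup_le' K1 K2 := by
    have h := contFun_union_le U κ (↑K1) (↑K2)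
    have := ENNReal.toNNReal_mono
      (by
        exact ENNReal.add_ne_top.2 ⟨contFun_ne_top U κ hκ _, contFun_ne_top U κ hκ _⟩) h
    rwa [ENNReal.toNNReal_add (contFun_ne_top U κ hκ _) (contFun_ne_top U κ hκ _)] at this

lemma limContent_apply (hκ : ∀ j, IsProbabilityMeasure (κ j)) (Kc : Compacts Om3) :
    (limContent U κ hκ : Compacts Om3 → ℝ≥0∞) Kc = contFun U κ Kc := by
  show ((limContent U κ hκ).toFun Kc : ℝ≥0∞) = contFun U κ Kc
  rw [limContent]
  exact ENNReal.coe_toNNReal (contFun_ne_top U κ hκ _)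

lemma contFun_sat3 (M : ℕ) (S : Set Om3) :
    contFun U κ (sat3 M S) = ulim U (fun j => κ j (sat3 M S)) := by
  refine le_antisymm ?_ ?_
  · refine (iInf_le _ M).trans ?_
    rw [nuM, sat3_sat3 le_rfl]
  · refine le_iInf fun M' => ?_
    rw [nuM]
    exact ulim_le fun j => measure_mono (subset_sat3 M' _)

lemma limContent_regular (hκ : ∀ j, IsProbabilityMeasure (κ j)) : (limContent U κ hκ).ContentRegular := by
  intro Kc
  refine le_antisymm ?_ ?_
  · refine le_iInf fun K' => le_iInf fun hK' => ?_
    rw [limContent_apply, limContent_apply]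
    exact contFun_mono U κ (hK'.trans interior_subset)
  · rw [limContent_apply, contFun]
    refine le_iInf fun M => ?_
    refine iInf_le_of_le ⟨sat3 M ↑Kc, ((isClopen_sat3 M ↑Kc).1).isCompact⟩ ?_
    refine iInf_le_of_le ?_ ?_
    · show (Kc : Set Om3) ⊆ interior (sat3 M ↑Kc)
      rw [(isClopen_sat3 M ↑Kc).2.interior_eq]
      exact subset_sat3 M _
    · rw [limContent_apply]
      simp only [Compacts.coe_mk]
      rw [contFun_sat3]
      rw [nuM]

/-- The ultrafilter-limit measure. -/
noncomputable def limMeas (hκ : ∀ j, IsProbabilityMeasure (κ j)) : Measure Om3 := (limContent U κ hκ).measure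

lemma limMeas_sat3 (hκ : ∀ j, IsProbabilityMeasure (κ j)) (M : ℕ) (S : Set Om3) :
    limMeas U κ hκ (sat3 M S) = ulim U (fun j => κ j (sat3 M S)) := by
  have h := Content.measure_eq_content_of_regular (limContent U κ hκ)
    (limContent_regular U κ hκ) ⟨sat3 M S, ((isClopen_sat3 M S).1).isCompact⟩
  rw [limMeas]
  calc (limContent U κ hκ).measure (sat3 M S)
      = (limContent U κ hκ : Compacts Om3 → ℝ≥0∞) ⟨sat3 M S, _⟩ := h
    _ = contFun U κ (sat3 M S) := limContent_apply U κ hκ _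
    _ = ulim U (fun j => κ j (sat3 M S)) := contFun_sat3 U κ M S

lemma sat3_univ (M : ℕ) : sat3 M (Set.univ : Set Om3) = Set.univ := by
  refine le_antisymm le_top (subset_sat3 M _)

lemma limMeas_prob (hκ : ∀ j, IsProbabilityMeasure (κ j)) : IsProbabilityMeasure (limMeas U κ hκ) := by
  constructor
  have h := limMeas_sat3 U κ hκ 0 Set.univ
  rw [sat3_univ] at h
  rw [h]
  have : (fun j => κ j (Set.univ : Set Om3)) = fun _ => (1 : ℝ≥0∞) := by
    funext j
    haveI := hκ j
    exact measure_univ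
  rw [this, ulim_const]

end MeasLim

section MeasLim2

open Filter Topology MeasureTheory
open scoped ENNReal NNReal

/-- The cylinder cell with prescribed window values. -/
def cell3 (M : ℕ) (γ : Gam M) : Set Om3 := res3 M ⁻¹' {γ}

lemma isClopen_cell3 (M : ℕ) (γ : Gam M) : IsClopen (cell3 M γ) :=
  ⟨(isClosed_discrete _).preimage (continuous_res3 M),
   (isOpen_discrete _).preimage (continuous_res3 M)⟩

lemma measurableSet_cell3 (M : ℕ) (γ : Gam M) : MeasurableSet (cell3 M γ) :=
  (isClopen_cell3 M γ).2.measurableSet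

lemma sat3_cell3 (M : ℕ) (γ : Gam M) : sat3 M (cell3 M γ) = cell3 M γ := by
  refine le_antisymm ?_ (subset_sat3 M _)
  intro t ht
  obtain ⟨s, hs, hagr⟩ := mem_sat3.1 ht
  have hsγ : res3 M s = γ := hs
  show res3 M t ∈ ({γ} : Set (Gam M))
  rw [← hsγ]
  exact (agr3_iff_res3.1 hagr).symm

lemma limMeas_cell3 (U : Ultrafilter ℕ) (κ : ℕ → Measure Om3)
    (hκ : ∀ j, IsProbabilityMeasure (κ j)) (M : ℕ) (γ : Gam M) :
    limMeas U κ hκ (cell3 M γ) = ulim U (fun j => κ j (cell3 M γ)) := by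
  conv_lhs => rw [← sat3_cell3 M γ]
  rw [limMeas_sat3 U κ hκ M (cell3 M γ), sat3_cell3 M γ]

lemma tendsto_cell3 (U : Ultrafilter ℕ) (κ : ℕ → Measure Om3)
    (hκ : ∀ j, IsProbabilityMeasure (κ j)) (M : ℕ) (γ : Gam M) :
    Tendsto (fun j => ((κ j) (cell3 M γ)).toReal) U
      (𝓝 ((limMeas U κ hκ (cell3 M γ)).toReal)) := by
  haveI := limMeas_prob U κ hκ
  have h1 := tendsto_ulim U (fun j => κ j (cell3 M γ))
  rw [← limMeas_cell3 U κ hκ M γ] at h1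
  exact (ENNReal.tendsto_toReal (measure_ne_top _ _)).comp h1

open scoped Classical in
/-- A representative point of each cell. -/
noncomputable def rep3 (M : ℕ) (γ : Gam M) : Om3 :=
  if h : (cell3 M γ).Nonempty then h.some else default

open scoped Classical in
lemma rep3_mem {M : ℕ} {γ : Gam M} (h : (cell3 M γ).Nonempty) : rep3 M γ ∈ cell3 M γ := by
  rw [rep3, dif_pos h]
  exact h.some_mem

lemma integrable_contMap (ν : Measure Om3) [IsFiniteMeasure ν] (f : C(Om3, ℝ)) :
    Integrable (fun t => f t) ν :=
  f.continuous.integrable_of_hasCompactSupport (HasCompactSupport.of_compactSpace _)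

/-- Approximation of the integral of a continuous function by a cylinder simple function. -/
lemma simple_integral (ν : Measure Om3) [IsProbabilityMeasure ν] (f : C(Om3, ℝ)) (M : ℕ)
    {ε : ℝ} (hMf : ∀ p q, agr3 M p q → |f p - f q| ≤ ε) :
    |(∫ t, f t ∂ν) - ∑ γ : Gam M, f (rep3 M γ) * (ν (cell3 M γ)).toReal| ≤ ε := by
  set g : Om3 → ℝ := fun t => f (rep3 M (res3 M t)) with hg
  have hmem : ∀ t : Om3, t ∈ cell3 M (res3 M t) := fun t => rfl
  have hfg : ∀ t, |f t - g t| ≤ ε := by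
    intro t
    apply hMf
    have hne : (cell3 M (res3 M t)).Nonempty := ⟨t, hmem t⟩
    have hr : res3 M (rep3 M (res3 M t)) = res3 M t := rep3_mem hne
    exact agr3_iff_res3.2 hr.symm
  have hgsum : g = fun t => ∑ γ : Gam M, (cell3 M γ).indicator (fun _ => f (rep3 M γ)) t := by
    funext t
    rw [Finset.sum_eq_single_of_mem (res3 M t) (Finset.mem_univ _)]
    · rw [Set.indicator_of_mem (hmem t)]
    · intro γ _ hne
      apply Set.indicator_of_notMem
      intro hmem'
      exact hne (Set.mem_singleton_iff.1 hmem').symm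
  have hgintg : Integrable g ν := by
    rw [hgsum]
    exact integrable_finset_sum _ fun γ _ =>
      (integrable_const _).indicator (measurableSet_cell3 M γ)
  have hgint : ∫ t, g t ∂ν = ∑ γ : Gam M, f (rep3 M γ) * (ν (cell3 M γ)).toReal := by
    rw [hgsum, integral_finset_sum _ fun γ _ =>
      (integrable_const _).indicator (measurableSet_cell3 M γ)]
    refine Finset.sum_congr rfl fun γ _ => ?_
    rw [integral_indicator_const _ (measurableSet_cell3 M γ), smul_eq_mul, mul_comm]
    rfl
  rw [← hgint, ← integral_sub (integrable_contMap ν f) hgintg]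
  have := norm_integral_le_of_norm_le_const (μ := ν) (f := fun t => f t - g t) (C := ε)
    (Eventually.of_forall fun t => by rw [Real.norm_eq_abs]; exact hfg t)
  rwa [Measure.real, measure_univ, ENNReal.toReal_one, mul_one, Real.norm_eq_abs] at this

/-- The integrals of continuous functions converge to those of the limit measure. -/
theorem limMeas_integral (U : Ultrafilter ℕ) (κ : ℕ → Measure Om3)
    (hκ : ∀ j, IsProbabilityMeasure (κ j)) (f : C(Om3, ℝ)) :
    Tendsto (fun j => ∫ t, f t ∂(κ j)) U (𝓝 (∫ t, f t ∂(limMeas U κ hκ))) := by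
  haveI hplim := limMeas_prob U κ hκ
  rw [Metric.tendsto_nhds]
  intro ε hε
  have hε4 : (0:ℝ) < ε/4 := by linarith
  obtain ⟨M, hM⟩ := unif3 f hε4
  set A : Measure Om3 → ℝ := fun ν => ∑ γ : Gam M, f (rep3 M γ) * (ν (cell3 M γ)).toReal
    with hA
  have happrox : ∀ (ν : Measure Om3), IsProbabilityMeasure ν →
      |(∫ t, f t ∂ν) - A ν| ≤ ε/4 := by
    intro ν hν
    haveI := hν
    exact simple_integral ν f M hM
  have hAlim : Tendsto (fun j => A (κ j)) U (𝓝 (A (limMeas U κ hκ))) := by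
    rw [hA]
    exact tendsto_finset_sum _ fun γ _ =>
      (tendsto_cell3 U κ hκ M γ).const_mul _
  rw [Metric.tendsto_nhds] at hAlim
  filter_upwards [hAlim (ε/4) hε4] with j hj
  rw [Real.dist_eq] at hj ⊢
  have h1 := happrox (κ j) (hκ j)
  have h2 := happrox (limMeas U κ hκ) hplim
  calc |(∫ t, f t ∂(κ j)) - ∫ t, f t ∂(limMeas U κ hκ)|
      = |((∫ t, f t ∂(κ j)) - A (κ j)) + (A (κ j) - A (limMeas U κ hκ)) +
          (A (limMeas U κ hκ) - ∫ t, f t ∂(limMeas U κ hκ))| := by ring_nf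
    _ ≤ |((∫ t, f t ∂(κ j)) - A (κ j)) + (A (κ j) - A (limMeas U κ hκ))| +
          |A (limMeas U κ hκ) - ∫ t, f t ∂(limMeas U κ hκ)| := abs_add_le _ _
    _ ≤ |(∫ t, f t ∂(κ j)) - A (κ j)| + |A (κ j) - A (limMeas U κ hκ)| +
          |A (limMeas U κ hκ) - ∫ t, f t ∂(limMeas U κ hκ)| := by
        have := abs_add_le ((∫ t, f t ∂(κ j)) - A (κ j)) (A (κ j) - A (limMeas U κ hκ))
        linarith
    _ < ε := by
        rw [abs_sub_comm] at h2
        linarith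

end MeasLim2

section Aux7

open Filter Topology MeasureTheory
open scoped ENNReal NNReal Classical

/-- Two finite measures with equal integrals of continuous functions agree. -/
lemma ext_integral {α : Type*} [MeasurableSpace α] [TopologicalSpace α] [CompactSpace α]
    [BorelSpace α] [HasOuterApproxClosed α] (μ ν : Measure α) [IsFiniteMeasure μ]
    [IsFiniteMeasure ν] (h : ∀ f : C(α, ℝ), (∫ x, f x ∂μ) = ∫ x, f x ∂ν) : μ = ν := by
  apply ext_of_forall_lintegral_eq_of_IsFiniteMeasure
  intro f
  have hc : Continuous fun x => ((f x : ℝ≥0) : ℝ) := NNReal.continuous_coe.comp f.continuous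
  set g : C(α, ℝ) := ⟨fun x => ((f x : ℝ≥0) : ℝ), hc⟩ with hg
  have hint : ∀ ξ : Measure α, IsFiniteMeasure ξ → Integrable (fun x => ((f x : ℝ≥0) : ℝ)) ξ := by
    intro ξ hξ
    exact hc.integrable_of_hasCompactSupport (HasCompactSupport.of_compactSpace _)
  rw [lintegral_coe_eq_integral (fun x => f x) (hint μ inferInstance),
    lintegral_coe_eq_integral (fun x => f x) (hint ν inferInstance)]
  congr 1
  exact h g

/-! ### Saturation machinery on pairs -/

abbrev Gam2 (M : ℕ) := (Win M → Bool) × (Win M → Bool)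

def res2 (M : ℕ) (p : BinSeq × BinSeq) : Gam2 M := (fun j => p.1 j, fun j => p.2 j)

lemma continuous_res2 (M : ℕ) : Continuous (res2 M) := by
  unfold res2
  refine Continuous.prodMk ?_ ?_ <;> refine continuous_pi fun j => ?_
  · exact (continuous_apply (A := fun _ : ℤ => Bool) (j : ℤ)).comp continuous_fst
  · exact (continuous_apply (A := fun _ : ℤ => Bool) (j : ℤ)).comp continuous_snd

lemma agr2_iff_res2 {M : ℕ} {s t : BinSeq × BinSeq} : agr2 M s t ↔ res2 M s = res2 M t := by
  constructor
  · intro h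
    refine Prod.ext (funext fun j => ?_) (funext fun j => ?_) <;>
    · have hj : (j : ℤ).natAbs ≤ M := by
        have := j.2
        rw [Finset.mem_Icc] at this
        omega
      first
        | exact h.1 _ hj
        | exact h.2 _ hj
  · intro h
    have h1 := congrArg Prod.fst h
    have h2 := congrArg Prod.snd h
    refine ⟨fun j hj => ?_, fun j hj => ?_⟩ <;>
    · have hjm : j ∈ Finset.Icc (-(M:ℤ)) (M:ℤ) := by
        rw [Finset.mem_Icc]
        omega
      first
        | exact congrFun h1 ⟨j, hjm⟩
        | exact congrFun h2 ⟨j, hjm⟩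

def sat2 (M : ℕ) (S : Set (BinSeq × BinSeq)) : Set (BinSeq × BinSeq) :=
  res2 M ⁻¹' (res2 M '' S)

lemma subset_sat2 (M : ℕ) (S : Set (BinSeq × BinSeq)) : S ⊆ sat2 M S := fun t ht => ⟨t, ht, rfl⟩

lemma mem_sat2 {M : ℕ} {S : Set (BinSeq × BinSeq)} {t : BinSeq × BinSeq} :
    t ∈ sat2 M S ↔ ∃ s ∈ S, agr2 M s t := by
  constructor
  · rintro ⟨s, hs, heq⟩
    exact ⟨s, hs, agr2_iff_res2.2 heq⟩
  · rintro ⟨s, hs, hagr⟩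
    exact ⟨s, hs, agr2_iff_res2.1 hagr⟩

lemma isClopen_sat2 (M : ℕ) (S : Set (BinSeq × BinSeq)) : IsClopen (sat2 M S) :=
  ⟨(isClosed_discrete _).preimage (continuous_res2 M),
   (isOpen_discrete _).preimage (continuous_res2 M)⟩

lemma iInter_sat2 (S : Set (BinSeq × BinSeq)) : ⋂ M, sat2 M S = closure S := by
  refine le_antisymm ?_ ?_
  · intro t ht
    rw [Set.mem_iInter] at ht
    rw [mem_closure_agr2]
    intro M
    exact mem_sat2.1 (ht M)
  · exact Set.subset_iInter fun M => closure_minimal (subset_sat2 M S) (isClopen_sat2 M S).1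

/-- Indicator of a clopen set as a continuous map. -/
noncomputable def indFn2 (C : Set (BinSeq × BinSeq)) (hC : IsClopen C) :
    C(BinSeq × BinSeq, ℝ) :=
  ⟨fun p => if p ∈ C then 1 else 0, by
    have : IsLocallyConstant fun p : BinSeq × BinSeq => if p ∈ C then (1:ℝ) else 0 := by
      intro s
      by_cases h1 : (1:ℝ) ∈ s <;> by_cases h0 : (0:ℝ) ∈ s
      · have : (fun p : BinSeq × BinSeq => if p ∈ C then (1:ℝ) else 0) ⁻¹' s = Set.univ := by
          ext p
          by_cases hp : p ∈ C <;> simp [hp, h1, h0]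
        rw [this]; exact isOpen_univ
      · have : (fun p : BinSeq × BinSeq => if p ∈ C then (1:ℝ) else 0) ⁻¹' s = C := by
          ext p
          by_cases hp : p ∈ C <;> simp [hp, h1, h0]
        rw [this]; exact hC.2
      · have : (fun p : BinSeq × BinSeq => if p ∈ C then (1:ℝ) else 0) ⁻¹' s = Cᶜ := by
          ext p
          by_cases hp : p ∈ C <;> simp [hp, h1, h0]
        rw [this]; exact hC.1.isOpen_compl
      · have : (fun p : BinSeq × BinSeq => if p ∈ C then (1:ℝ) else 0) ⁻¹' s = ∅ := by
          ext p
          by_cases hp : p ∈ C <;> simp [hp, h1, h0]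
        rw [this]; exact isOpen_empty
    exact this.continuous⟩

lemma integral_indFn2 (C : Set (BinSeq × BinSeq)) (hC : IsClopen C)
    (ρ : Measure (BinSeq × BinSeq)) :
    ∫ p, indFn2 C hC p ∂ρ = (ρ C).toReal := by
  have : (fun p => indFn2 C hC p) = C.indicator (fun _ => (1:ℝ)) := by
    funext p
    by_cases h : p ∈ C
    · simp only [indFn2, ContinuousMap.coe_mk, Set.indicator_of_mem h, if_pos h]
    · simp only [indFn2, ContinuousMap.coe_mk, Set.indicator_of_notMem h, if_neg h]
  rw [this, integral_indicator_const (1:ℝ) hC.2.measurableSet]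
  simp [Measure.real]

/-- The forward orbit of a point under `shift2`. -/
def orb2 (q : BinSeq × BinSeq) : Set (BinSeq × BinSeq) := {p | ∃ n : ℕ, p = shift2^[n] q}

/-- A quasi-generic measure is concentrated on the orbit closure. -/
lemma rhoinf_orbit (q : BinSeq × BinSeq) (N : ℕ → ℕ) (hN : StrictMono N)
    (ρinf : Measure (BinSeq × BinSeq)) [IsProbabilityMeasure ρinf]
    (hqginf : QuasiGenericAlong shift2 q N ρinf) :
    ρinf (closure (orb2 q)) = 1 := by
  have hCM : ∀ M : ℕ, ρinf (sat2 M (orb2 q)) = 1 := by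
    intro M
    set C := sat2 M (orb2 q) with hC
    set f := indFn2 C (isClopen_sat2 M (orb2 q)) with hf
    have h1 := hqginf f
    have h2 : ∀ᶠ i in atTop, birkAvg shift2 q (N i) f = 1 := by
      filter_upwards [eventually_ge_atTop 1] with i hi
      have hNi : 1 ≤ N i := le_trans hi hN.le_apply
      unfold birkAvg
      have hval : ∀ t ∈ Finset.range (N i), f (shift2^[t] q) = 1 := by
        intro t _
        have : shift2^[t] q ∈ C := subset_sat2 M _ ⟨t, rfl⟩
        simp only [hf, indFn2, ContinuousMap.coe_mk, if_pos this]
      rw [Finset.sum_congr rfl hval, Finset.sum_const, Finset.card_range, nsmul_eq_mul,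
        mul_one, div_self]
      exact_mod_cast Nat.one_le_iff_ne_zero.1 hNi
    have h3 : Tendsto (fun i => birkAvg shift2 q (N i) f) atTop (𝓝 1) :=
      Tendsto.congr' (h2.mono fun i hi => hi.symm) tendsto_const_nhds
    have h4 : (∫ p, f p ∂ρinf) = 1 := tendsto_nhds_unique h1 h3
    rw [hf, integral_indFn2] at h4
    have h5 := congrArg ENNReal.ofReal h4
    rwa [ENNReal.ofReal_toReal (measure_ne_top _ _), ENNReal.ofReal_one] at h5
  rw [← prob_compl_eq_zero_iff (isClosed_closure.measurableSet (s := closure (orb2 q)))]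
  have : (closure (orb2 q))ᶜ = ⋃ M, (sat2 M (orb2 q))ᶜ := by
    rw [← iInter_sat2, Set.compl_iInter]
  rw [this]
  refine measure_iUnion_null fun M => ?_
  rw [prob_compl_eq_zero_iff (isClopen_sat2 M (orb2 q)).2.measurableSet]
  exact hCM M

/-- The pointwise sandwich lemma: `N` of a point over the orbit closure lies in the
sandwich subshift. -/
lemma pw_lemma (winf xinf : BinSeq) (hle : ∀ n, winf n ≤ xinf n) (uv : BinSeq × BinSeq)
    (huv : uv ∈ closure (orb2 (winf, xinf))) (yy : BinSeq) :
    Nmap (uv, yy) ∈ closure (sandwichSet winf xinf) := by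
  rw [mem_closure_agr1]
  intro M
  rw [mem_closure_agr2] at huv
  obtain ⟨s, ⟨n, rfl⟩, hagr⟩ := huv M
  rw [shift2_iter] at hagr
  set z : BinSeq := Nmap (uv, yy) with hz
  have huz : ∀ j : ℤ, j.natAbs ≤ M →
      winf (j + n) = uv.1 j ∧ xinf (j + n) = uv.2 j ∧ uv.1 j ≤ z j ∧ z j ≤ uv.2 j := by
    intro j hj
    have h1 : winf (j + n) = uv.1 j := hagr.1 j hj
    have h2 : xinf (j + n) = uv.2 j := hagr.2 j hj
    have h12 : uv.1 j ≤ uv.2 j := by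
      rw [← h1, ← h2]
      exact hle (j + n)
    have hzj : z j = bif yy j then uv.2 j else uv.1 j := rfl
    refine ⟨h1, h2, ?_, ?_⟩ <;>
    · rw [hzj]
      cases yy j <;> simp [h12]
  set y' : BinSeq := fun m => if (m - n).natAbs ≤ M then z (m - n) else winf m with hy'
  refine ⟨fun j => y' (j + n), ⟨(n : ℤ), y', ?_, ?_, rfl⟩, ?_⟩
  · intro m
    by_cases h : (m - (n:ℤ)).natAbs ≤ M
    · have := huz (m - n) h
      rw [hy']
      simp only [if_pos h]
      have heq : m - (n:ℤ) + n = m := by ring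
      calc winf m = winf (m - (n:ℤ) + n) := by rw [heq]
        _ = uv.1 (m - n) := this.1
        _ ≤ z (m - n) := this.2.2.1
    · rw [hy']
      simp only [if_neg h]
      exact le_rfl
  · intro m
    by_cases h : (m - (n:ℤ)).natAbs ≤ M
    · have := huz (m - n) h
      rw [hy']
      simp only [if_pos h]
      have heq : m - (n:ℤ) + n = m := by ring
      calc z (m - n) ≤ uv.2 (m - n) := this.2.2.2
        _ = xinf (m - (n:ℤ) + n) := this.2.1.symm
        _ = xinf m := by rw [heq]
    · rw [hy']
      simp only [if_neg h]
      exact hle m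
  · intro j hj
    have heq : j + (n:ℤ) - n = j := by ring
    rw [hy']
    simp only [heq, if_pos hj]

end Aux7


/-- Let `(w_K, x_K)` be a good sequence of pairs with limit `(w,x)`, and
suppose each `[w_K, x_K]‾` is a sandwich measure-theoretically subordinate subshift with base
measure `ρ_K`. Then both `⋂_K [w_K, x_K]‾` and `[w,x]‾` are sandwich measure-theoretically
subordinate subshifts with base measure `ρ = lim ρ_K`. -/
theorem stmt12 (w x : ℕ → BinSeq) (winf xinf : BinSeq) (N : ℕ → ℕ)
    (ρ : ℕ → Measure (BinSeq × BinSeq)) (ρinf : Measure (BinSeq × BinSeq))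
    (hwx : ∀ K, leSeq (w K) (x K))
    (hwmono : ∀ n : ℤ, Monotone (fun K => w K n))
    (hxmono : ∀ n : ℤ, Antitone (fun K => x K n))
    (hwlim : ∀ n : ℤ, ∃ K0, ∀ K ≥ K0, w K n = winf n)
    (hxlim : ∀ n : ℤ, ∃ K0, ∀ K ≥ K0, x K n = xinf n)
    (hN : StrictMono N)
    (hP : ∀ K, ρ K ∈ InvProb shift2) (hPinf : ρinf ∈ InvProb shift2)
    (hqg : ∀ K, QuasiGenericAlong shift2 (w K, x K) N (ρ K))
    (hqginf : QuasiGenericAlong shift2 (winf, xinf) N ρinf)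
    (hdens : Filter.Tendsto
      (fun K => ((ρ K) {p : BinSeq × BinSeq | p.1 0 = false ∧ p.2 0 = true}).toReal)
      Filter.atTop
      (nhds ((ρinf {p : BinSeq × BinSeq | p.1 0 = false ∧ p.2 0 = true}).toReal)))
    (hsubK : ∀ K, SandwichSubord (closure (sandwichSet (w K) (x K))) (ρ K))
    (hdiagK : ∀ K, AboveDiag (ρ K)) :
    SandwichSubord (⋂ K, closure (sandwichSet (w K) (x K))) ρinf ∧
    SandwichSubord (closure (sandwichSet winf xinf)) ρinf := by
  classical
  set XK : ℕ → Set BinSeq := fun K => closure (sandwichSet (w K) (x K)) with hXK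
  set Xinf : Set BinSeq := closure (sandwichSet winf xinf) with hXinf
  haveI hρinfP : IsProbabilityMeasure ρinf := hPinf.1
  -- order facts
  have hordw : ∀ K n, w K n ≤ winf n := fun K n => wle_lemma hwmono hwlim K n
  have hordx : ∀ K n, xinf n ≤ x K n := fun K n => xge_lemma hxmono hxlim K n
  have hle3 : ∀ n, winf n ≤ xinf n := by
    intro n
    obtain ⟨K1, h1⟩ := hwlim n
    obtain ⟨K2, h2⟩ := hxlim n
    calc winf n = w (max K1 K2) n := (h1 _ (le_max_left _ _)).symm
      _ ≤ x (max K1 K2) n := hwx _ n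
      _ = xinf n := h2 _ (le_max_right _ _)
  have hXsub : ∀ K, Xinf ⊆ XK K := fun K =>
    closure_mono (sandwichSet_mono (hordw K) (hordx K))
  -- weak convergence of the base measures
  have hwint : ∀ f : C(BinSeq × BinSeq, ℝ),
      Filter.Tendsto (fun K => ∫ p, f p ∂(ρ K)) Filter.atTop (𝓝 (∫ p, f p ∂ρinf)) :=
    rho_tendsto w x winf xinf N ρ ρinf hwx hwmono hxmono hwlim hxlim hN hP hPinf hqg hqginf
      hdens
  -- the hard inclusion: measures in all the `S(ρ K)` lie in `S(ρinf)`
  have hB : ∀ μ : Measure BinSeq,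
      (∀ K, μ ∈ {μ | ∃ κ ∈ InvProb shift3,
        Measure.map Prod.fst κ = ρ K ∧ Measure.map Nmap κ = μ}) →
      μ ∈ {μ | ∃ κ ∈ InvProb shift3,
        Measure.map Prod.fst κ = ρinf ∧ Measure.map Nmap κ = μ} := by
    intro μ hall
    choose κs hκinv hκfst hκN using hall
    set U : Ultrafilter ℕ := Ultrafilter.of Filter.atTop with hU
    have hUle : (U : Filter ℕ) ≤ Filter.atTop := Ultrafilter.of_le _
    have hκprob : ∀ j, IsProbabilityMeasure (κs j) := fun j => (hκinv j).1
    set κ := limMeas U κs hκprob with hκdef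
    haveI hκp : IsProbabilityMeasure κ := limMeas_prob U κs hκprob
    haveI hμp : IsProbabilityMeasure μ := by
      rw [← hκN 0]
      haveI := hκprob 0
      exact Measure.isProbabilityMeasure_map continuous_Nmap.measurable.aemeasurable
    have hlim : ∀ g : C(Om3, ℝ),
        Filter.Tendsto (fun j => ∫ t, g t ∂(κs j)) U (𝓝 (∫ t, g t ∂κ)) :=
      limMeas_integral U κs hκprob
    have hinv : Measure.map shift3 κ = κ := by
      haveI : IsProbabilityMeasure (Measure.map shift3 κ) :=
        Measure.isProbabilityMeasure_map continuous_shift3.measurable.aemeasurable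
      apply ext_integral
      intro f
      rw [integral_map continuous_shift3.measurable.aemeasurable
        f.continuous.aestronglyMeasurable]
      set g : C(Om3, ℝ) := f.comp ⟨shift3, continuous_shift3⟩ with hgdef
      have hgf : ∀ t, f (shift3 t) = g t := fun t => rfl
      simp only [hgf]
      have h1 := hlim g
      have h2 : ∀ j, ∫ t, g t ∂(κs j) = ∫ t, f t ∂(κs j) := by
        intro j
        have hmap : ∫ t, f t ∂(Measure.map shift3 (κs j)) = ∫ t, f (shift3 t) ∂(κs j) :=
          integral_map continuous_shift3.measurable.aemeasurable
            f.continuous.aestronglyMeasurable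
        rw [(hκinv j).2] at hmap
        simp only [hgf] at hmap
        exact hmap.symm
      rw [show (fun j => ∫ t, g t ∂(κs j)) = (fun j => ∫ t, f t ∂(κs j)) from funext h2] at h1
      exact (tendsto_nhds_unique (hlim f) h1).symm
    have hfst : Measure.map Prod.fst κ = ρinf := by
      haveI : IsProbabilityMeasure (Measure.map (Prod.fst : Om3 → BinSeq × BinSeq) κ) :=
        Measure.isProbabilityMeasure_map measurable_fst.aemeasurable
      apply ext_integral
      intro f
      rw [integral_map measurable_fst.aemeasurable f.continuous.aestronglyMeasurable]
      set g : C(Om3, ℝ) := f.comp ⟨Prod.fst, continuous_fst⟩ with hgdef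
      have hgf : ∀ t : Om3, f t.1 = g t := fun t => rfl
      simp only [hgf]
      have h1 := hlim g
      have h2 : ∀ j, ∫ t, g t ∂(κs j) = ∫ p, f p ∂(ρ j) := by
        intro j
        rw [← hκfst j]
        rw [integral_map measurable_fst.aemeasurable f.continuous.aestronglyMeasurable]
        simp only [hgf]
      rw [show (fun j => ∫ t, g t ∂(κs j)) = (fun j => ∫ p, f p ∂(ρ j)) from funext h2] at h1
      exact tendsto_nhds_unique h1 ((hwint f).mono_left hUle)
    have hNm : Measure.map Nmap κ = μ := by
      haveI : IsProbabilityMeasure (Measure.map Nmap κ) :=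
        Measure.isProbabilityMeasure_map continuous_Nmap.measurable.aemeasurable
      apply ext_integral
      intro f
      rw [integral_map continuous_Nmap.measurable.aemeasurable
        f.continuous.aestronglyMeasurable]
      set g : C(Om3, ℝ) := f.comp ⟨Nmap, continuous_Nmap⟩ with hgdef
      have hgf : ∀ t, f (Nmap t) = g t := fun t => rfl
      simp only [hgf]
      have h1 := hlim g
      have h2 : ∀ j, ∫ t, g t ∂(κs j) = ∫ z, f z ∂μ := by
        intro j
        rw [← hκN j]
        rw [integral_map continuous_Nmap.measurable.aemeasurable
          f.continuous.aestronglyMeasurable]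
        simp only [hgf]
      rw [show (fun j => ∫ t, g t ∂(κs j)) = (fun _ => ∫ z, f z ∂μ) from funext h2] at h1
      exact tendsto_nhds_unique h1 tendsto_const_nhds
    exact ⟨κ, ⟨hκp, hinv⟩, hfst, hNm⟩
  -- the easy inclusion: `S(ρinf) ⊆ 𝓜(Xinf)`
  have hC : ∀ μ : Measure BinSeq,
      μ ∈ {μ | ∃ κ ∈ InvProb shift3,
        Measure.map Prod.fst κ = ρinf ∧ Measure.map Nmap κ = μ} → μ ∈ MeasOn Xinf := by
    rintro μ ⟨κ, ⟨hκp, hκinv⟩, hfstκ, hNmκ⟩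
    haveI := hκp
    have hcomm : shift ∘ Nmap = Nmap ∘ shift3 := rfl
    refine ⟨⟨?_, ?_⟩, ?_⟩
    · rw [← hNmκ]
      exact Measure.isProbabilityMeasure_map continuous_Nmap.measurable.aemeasurable
    · rw [← hNmκ]
      calc Measure.map shift (Measure.map Nmap κ)
          = Measure.map (shift ∘ Nmap) κ :=
            Measure.map_map continuous_shift.measurable continuous_Nmap.measurable
        _ = Measure.map (Nmap ∘ shift3) κ := by rw [hcomm]
        _ = Measure.map Nmap (Measure.map shift3 κ) :=
            (Measure.map_map continuous_Nmap.measurable continuous_shift3.measurable).symm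
        _ = Measure.map Nmap κ := by rw [hκinv]
    · rw [← hNmκ]
      rw [Measure.map_apply continuous_Nmap.measurable isClosed_closure.measurableSet]
      have hsub : (Prod.fst : Om3 → BinSeq × BinSeq) ⁻¹' (closure (orb2 (winf, xinf))) ⊆
          Nmap ⁻¹' Xinf := by
        intro t ht
        exact pw_lemma winf xinf hle3 t.1 ht t.2
      have h1 : κ ((Prod.fst : Om3 → BinSeq × BinSeq) ⁻¹'
          (closure (orb2 (winf, xinf)))) = 1 := by
        rw [← Measure.map_apply measurable_fst isClosed_closure.measurableSet, hfstκ]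
        exact rhoinf_orbit (winf, xinf) N hN ρinf hqginf
      refine le_antisymm prob_le_one ?_
      rw [← h1]
      exact measure_mono hsub
  -- membership transfer through `hsubK`
  have hforward : ∀ μ : Measure BinSeq, μ ∈ MeasOn Xinf → ∀ K,
      μ ∈ {μ | ∃ κ ∈ InvProb shift3,
        Measure.map Prod.fst κ = ρ K ∧ Measure.map Nmap κ = μ} := by
    intro μ hμ K
    have h1 : μ ∈ MeasOn (XK K) := measOn_mono (hXsub K) hμ
    rwa [hsubK K] at h1
  have hMeasInter : MeasOn (⋂ K, XK K) = ⋂ K, MeasOn (XK K) :=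
    measOn_iInter XK fun K => isClosed_closure
  constructor
  · show MeasOn (⋂ K, XK K) = _
    apply Set.Subset.antisymm
    · intro μ hμ
      apply hB
      intro K
      have h1 : μ ∈ MeasOn (XK K) := by
        rw [hMeasInter] at hμ
        exact Set.mem_iInter.1 hμ K
      rwa [hsubK K] at h1
    · intro μ hμ
      have h1 : μ ∈ MeasOn Xinf := hC μ hμ
      exact measOn_mono (Set.subset_iInter hXsub) h1
  · show MeasOn Xinf = _
    apply Set.Subset.antisymm
    · intro μ hμ
      exact hB μ (hforward μ hμ)
    · intro μ hμ
      exact hC μ hμ
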